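/- arXiv:1307.4281 — 5 statements merged into one kernel-verified Lean document; each statement's English description precedes it below -/
import Mathlib

section
/- Let A be an n×n Hermitian matrix over ℍ, let i ∈ {1,…,n}, and let b = c₁·a_{i₁.} + ⋯ + c_k·a_{i_k.} be a left ℍ-linear combination of rows of A with indices i₁,…,i_k all different from i (c₁,…,c_k ∈ ℍ). Then rdet_i A_{i.}(b) = 0 and cdet_i A_{i.}(b) = 0. -/
open Quaternion Matrix Finset

noncomputable section

/-- Ordered product of the entries of `A` along the cycle of `σ` containing `x`,
starting at `x`:  `a_{x,σx} · a_{σx,σ²x} ⋯ a_{σ^{c-1}x,x}`. -/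
def cycProd {n : ℕ} (A : Matrix (Fin n) (Fin n) ℍ[ℝ]) (σ : Equiv.Perm (Fin n))
    (x : Fin n) : ℍ[ℝ] :=
  ((List.range (Function.minimalPeriod (⇑σ) x)).map
    (fun t => A ((⇑σ)^[t] x) ((⇑σ)^[t + 1] x))).prod

/-- `x` is the smallest element of its `σ`-cycle. -/
def isLeaderB {n : ℕ} (σ : Equiv.Perm (Fin n)) (x : Fin n) : Bool :=
  (List.range n).all fun t => decide (x ≤ (⇑σ)^[t] x)

/-- `x` lies in the `σ`-cycle of `i`. -/
def inCycleB {n : ℕ} (σ : Equiv.Perm (Fin n)) (i x : Fin n) : Bool :=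
  (List.range n).any fun t => decide ((⇑σ)^[t] i = x)

/-- The increasing list of the smallest elements of the `σ`-cycles other than
the cycle of `i`. -/
def leaders {n : ℕ} (σ : Equiv.Perm (Fin n)) (i : Fin n) : List (Fin n) :=
  (List.finRange n).filter fun x => isLeaderB σ x && !(inCycleB σ i x)

/-- The `i`-th row determinant of a quaternion matrix: the sum over all
permutations, written in left-ordered cycle notation (the cycle of `i` first,
starting with `i`; every other cycle starting with its smallest element, these
smallest elements increasing from left to right), of the sign times the ordered
product of the corresponding entries. -/
def rdet {n : ℕ} (A : Matrix (Fin n) (Fin n) ℍ[ℝ]) (i : Fin n) : ℍ[ℝ] :=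
  ∑ σ : Equiv.Perm (Fin n),
    ((Equiv.Perm.sign σ : ℤ) : ℍ[ℝ]) *
      (cycProd A σ i * ((leaders σ i).map (cycProd A σ)).prod)

/-- The `j`-th column determinant of a quaternion matrix: the sum over all
permutations, written in right-ordered cycle notation (the cycle of `j` last,
ending with `j`; every other cycle ending with its smallest element, these
smallest elements increasing from right to left), of the sign times the ordered
product of the corresponding entries. -/
def cdet {n : ℕ} (A : Matrix (Fin n) (Fin n) ℍ[ℝ]) (j : Fin n) : ℍ[ℝ] :=
  ∑ τ : Equiv.Perm (Fin n),
    ((Equiv.Perm.sign τ : ℤ) : ℍ[ℝ]) *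
      ((((leaders τ j).reverse).map (cycProd A τ)).prod * cycProd A τ j)

/-- The determinant of a (Hermitian) quaternion matrix: the common value of all
row and column determinants. -/
def Hdet : {m : ℕ} → Matrix (Fin m) (Fin m) ℍ[ℝ] → ℍ[ℝ]
  | 0, _ => 1
  | _ + 1, A => rdet A 0

/-- The principal submatrix of `M` with rows and columns indexed by `β`. -/
def principalSub {n : ℕ} (M : Matrix (Fin n) (Fin n) ℍ[ℝ]) (β : Finset (Fin n)) :
    Matrix (Fin β.card) (Fin β.card) ℍ[ℝ] :=
  M.submatrix (⇑(β.orderEmbOfFin rfl)) (⇑(β.orderEmbOfFin rfl))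

/-- The position of `i` inside the increasing enumeration of the finset `β`. -/
def posIn {n : ℕ} (β : Finset (Fin n)) {i : Fin n} (h : i ∈ β) : Fin β.card :=
  (β.orderIsoOfFin rfl).symm ⟨i, h⟩

/-- `Σ_{β ∈ J_{s,n}{i}} cdet_i (M_β^β)`: the sum, over all subsets `β` of
cardinality `s` containing `i`, of the column determinants of the principal
submatrix `M_β^β` taken at the position of `i` within `β`. -/
def cdetPM {n : ℕ} (M : Matrix (Fin n) (Fin n) ℍ[ℝ]) (s : ℕ) (i : Fin n) : ℍ[ℝ] :=
  ∑ β ∈ ((Finset.powersetCard s (Finset.univ : Finset (Fin n))).filter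
      fun β => i ∈ β).attach,
    cdet (principalSub M β.1) (posIn β.1 (Finset.mem_filter.mp β.2).2)

/-- `Σ_{α ∈ I_{s,n}{j}} rdet_j (M_α^α)`: the sum, over all subsets `α` of
cardinality `s` containing `j`, of the row determinants of the principal
submatrix `M_α^α` taken at the position of `j` within `α`. -/
def rdetPM {n : ℕ} (M : Matrix (Fin n) (Fin n) ℍ[ℝ]) (s : ℕ) (j : Fin n) : ℍ[ℝ] :=
  ∑ α ∈ ((Finset.powersetCard s (Finset.univ : Finset (Fin n))).filter
      fun α => j ∈ α).attach,
    rdet (principalSub M α.1) (posIn α.1 (Finset.mem_filter.mp α.2).2)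

/-- The sum of all principal minors of `M` of order `r`. -/
def minorSum {n : ℕ} (M : Matrix (Fin n) (Fin n) ℍ[ℝ]) (r : ℕ) : ℍ[ℝ] :=
  ∑ β ∈ Finset.powersetCard r (Finset.univ : Finset (Fin n)),
    Hdet (principalSub M β)

/-- The (column) rank of a quaternion matrix: the dimension of the span of its
columns as a right `ℍ`-vector space. -/
def qrank {m n : ℕ} (A : Matrix (Fin m) (Fin n) ℍ[ℝ]) : ℕ :=
  Module.finrank ℍ[ℝ]ᵐᵒᵖ
    (Submodule.span ℍ[ℝ]ᵐᵒᵖ (Set.range Aᵀ) : Submodule ℍ[ℝ]ᵐᵒᵖ (Fin m → ℍ[ℝ]))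

/-- `Ind A = k`: `k` is the smallest nonnegative integer with
`rank A^(k+1) = rank A^k`. -/
def isInd {n : ℕ} (A : Matrix (Fin n) (Fin n) ℍ[ℝ]) (k : ℕ) : Prop :=
  qrank (A ^ (k + 1)) = qrank (A ^ k) ∧
    ∀ l < k, qrank (A ^ (l + 1)) ≠ qrank (A ^ l)

/-- `X` is a Drazin inverse of `A` (relative to the index `k`). -/
def isDrazin {n : ℕ} (A X : Matrix (Fin n) (Fin n) ℍ[ℝ]) (k : ℕ) : Prop :=
  A ^ (k + 1) * X = A ^ k ∧ X * A * X = X ∧ A * X = X * A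

end

section Aux
open Equiv Equiv.Perm Function Quaternion Matrix

variable {n : ℕ}

lemma star_list_prod (l : List ℍ[ℝ]) : star l.prod = (l.reverse.map star).prod := by
  induction l with
  | nil => simp
  | cons a l ih => rw [List.prod_cons, StarMul.star_mul, ih]; simp

lemma perm_iterate_eq_pow (σ : Equiv.Perm (Fin n)) (t : ℕ) (x : Fin n) :
    (⇑σ)^[t] x = (σ ^ t) x := by
  rw [Equiv.Perm.coe_pow]

lemma perm_mem_periodicPts (σ : Equiv.Perm (Fin n)) (x : Fin n) : x ∈ periodicPts ⇑σ :=
  ⟨orderOf σ, orderOf_pos σ, by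
    show (⇑σ)^[orderOf σ] x = x
    rw [perm_iterate_eq_pow, pow_orderOf_eq_one]; rfl⟩

lemma per_pos (σ : Equiv.Perm (Fin n)) (x : Fin n) : 0 < minimalPeriod ⇑σ x :=
  minimalPeriod_pos_of_mem_periodicPts (perm_mem_periodicPts σ x)

lemma iterate_per (σ : Equiv.Perm (Fin n)) (x : Fin n) :
    (⇑σ)^[minimalPeriod ⇑σ x] x = x :=
  iterate_minimalPeriod

lemma iterate_ne_of_lt (σ : Equiv.Perm (Fin n)) (x : Fin n) {t : ℕ} (h0 : 0 < t)
    (h : t < minimalPeriod ⇑σ x) : (⇑σ)^[t] x ≠ x := by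
  intro he
  exact absurd (IsPeriodicPt.minimalPeriod_le h0 he) (not_le.mpr h)

lemma sameCycle_iff_iterate {σ : Equiv.Perm (Fin n)} {x y : Fin n} :
    σ.SameCycle x y ↔ ∃ t : ℕ, (⇑σ)^[t] x = y := by
  constructor
  · intro h
    obtain ⟨k, _, _, hk⟩ := Equiv.Perm.SameCycle.exists_pow_eq σ h
    exact ⟨k, by rw [perm_iterate_eq_pow]; exact hk⟩
  · rintro ⟨t, rfl⟩
    exact ⟨(t : ℤ), by rw [zpow_natCast, ← perm_iterate_eq_pow]⟩

lemma per_le (σ : Equiv.Perm (Fin n)) (x : Fin n) : minimalPeriod ⇑σ x ≤ n := by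
  have hinj : Function.Injective
      (fun t : Fin (minimalPeriod ⇑σ x) => (⇑σ)^[(t : ℕ)] x) := by
    have key : ∀ a b : Fin (minimalPeriod ⇑σ x), a ≤ b →
        (⇑σ)^[(a : ℕ)] x = (⇑σ)^[(b : ℕ)] x → a = b := by
      intro a b hle he
      have hb : (b : ℕ) = (a : ℕ) + ((b : ℕ) - a) := by omega
      rw [hb, Function.iterate_add_apply] at he
      have h2 : (⇑σ)^[(b : ℕ) - a] x = x :=
        (Function.Injective.iterate σ.injective (a : ℕ)) he.symm
      have : (b : ℕ) - a = 0 := by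
        by_contra h3
        exact iterate_ne_of_lt σ x (Nat.pos_of_ne_zero h3) (by omega) h2
      exact Fin.ext (by omega)
    intro a b hab
    rcases le_total a b with h | h
    · exact key a b h hab
    · exact (key b a h hab.symm).symm
  simpa using Fintype.card_le_of_injective _ hinj

lemma sameCycle_iff_iterate_lt {σ : Equiv.Perm (Fin n)} {x y : Fin n} :
    σ.SameCycle x y ↔ ∃ t, t < n ∧ (⇑σ)^[t] x = y := by
  rw [sameCycle_iff_iterate]
  constructor
  · rintro ⟨t, rfl⟩
    refine ⟨t % minimalPeriod ⇑σ x, ?_, iterate_mod_minimalPeriod_eq⟩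
    exact lt_of_lt_of_le (Nat.mod_lt _ (per_pos σ x)) (per_le σ x)
  · rintro ⟨t, _, h⟩; exact ⟨t, h⟩

lemma iterate_ne_of_not_sameCycle {σ : Equiv.Perm (Fin n)} {x i : Fin n}
    (h : ¬ σ.SameCycle x i) (t : ℕ) : (⇑σ)^[t] x ≠ i :=
  fun he => h (sameCycle_iff_iterate.mpr ⟨t, he⟩)

lemma inCycleB_iff {σ : Equiv.Perm (Fin n)} {i x : Fin n} :
    inCycleB σ i x = true ↔ σ.SameCycle i x := by
  rw [sameCycle_iff_iterate_lt]
  simp [inCycleB, List.any_eq_true, List.mem_range]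

lemma isLeaderB_iff {σ : Equiv.Perm (Fin n)} {x : Fin n} :
    isLeaderB σ x = true ↔ ∀ y, σ.SameCycle x y → x ≤ y := by
  simp only [isLeaderB, List.all_eq_true, List.mem_range, decide_eq_true_eq]
  constructor
  · intro h y hy
    obtain ⟨t, ht, rfl⟩ := sameCycle_iff_iterate_lt.mp hy
    exact h t ht
  · intro h t _
    exact h _ (sameCycle_iff_iterate.mpr ⟨t, rfl⟩)

lemma mem_leaders_iff {σ : Equiv.Perm (Fin n)} {i x : Fin n} :
    x ∈ leaders σ i ↔ (∀ y, σ.SameCycle x y → x ≤ y) ∧ ¬ σ.SameCycle i x := by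
  rw [leaders, List.mem_filter]
  simp only [List.mem_finRange, true_and, Bool.and_eq_true, Bool.not_eq_true',
    ← isLeaderB_iff]
  rw [isLeaderB_iff]
  constructor
  · rintro ⟨h1, h2⟩
    exact ⟨h1, fun hc => by simp [inCycleB_iff.mpr hc] at h2⟩
  · rintro ⟨h1, h2⟩
    refine ⟨h1, ?_⟩
    cases hb : inCycleB σ i x
    · rfl
    · exact absurd (inCycleB_iff.mp hb) h2

lemma leaders_nodup (σ : Equiv.Perm (Fin n)) (i : Fin n) : (leaders σ i).Nodup :=
  (List.nodup_finRange n).filter _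

lemma leaders_congr {σ₁ σ₂ : Equiv.Perm (Fin n)}
    (h : ∀ a b, σ₁.SameCycle a b ↔ σ₂.SameCycle a b) (i : Fin n) :
    leaders σ₁ i = leaders σ₂ i := by
  unfold leaders
  apply List.filter_congr
  intro x _
  have h1 : isLeaderB σ₁ x = isLeaderB σ₂ x := by
    rw [Bool.eq_iff_iff, isLeaderB_iff, isLeaderB_iff]
    exact ⟨fun H y hy => H y ((h x y).mpr hy), fun H y hy => H y ((h x y).mp hy)⟩
  have h2 : inCycleB σ₁ i x = inCycleB σ₂ i x := by
    rw [Bool.eq_iff_iff, inCycleB_iff, inCycleB_iff]; exact h i x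
  rw [h1, h2]

end Aux
section Aux2
open Equiv Equiv.Perm Function Quaternion Matrix

variable {n : ℕ}

lemma perm_minimalPeriod_congr {σ₁ σ₂ : Equiv.Perm (Fin n)} {x : Fin n}
    (h : ∀ t, (⇑σ₁)^[t] x = (⇑σ₂)^[t] x) :
    minimalPeriod ⇑σ₁ x = minimalPeriod ⇑σ₂ x := by
  have key : ∀ τ₁ τ₂ : Equiv.Perm (Fin n), (∀ t, (⇑τ₁)^[t] x = (⇑τ₂)^[t] x) →
      minimalPeriod ⇑τ₁ x ≤ minimalPeriod ⇑τ₂ x := by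
    intro τ₁ τ₂ ht
    refine IsPeriodicPt.minimalPeriod_le (per_pos τ₂ x) ?_
    show (⇑τ₁)^[minimalPeriod ⇑τ₂ x] x = x
    rw [ht]; exact iterate_per τ₂ x
  exact le_antisymm (key _ _ h) (key _ _ fun t => (h t).symm)

lemma cycProd_congr (M : Matrix (Fin n) (Fin n) ℍ[ℝ]) {σ₁ σ₂ : Equiv.Perm (Fin n)}
    {x : Fin n} (h : ∀ t, (⇑σ₁)^[t] x = (⇑σ₂)^[t] x) :
    cycProd M σ₁ x = cycProd M σ₂ x := by
  unfold cycProd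
  rw [perm_minimalPeriod_congr h]
  congr 1
  apply List.map_congr_left
  intro t _
  rw [h t, h (t + 1)]

lemma cycProd_updateRow_of_ne (M : Matrix (Fin n) (Fin n) ℍ[ℝ]) (b : Fin n → ℍ[ℝ])
    {σ : Equiv.Perm (Fin n)} {x i : Fin n} (h : ∀ t, (⇑σ)^[t] x ≠ i) :
    cycProd (M.updateRow i b) σ x = cycProd M σ x := by
  unfold cycProd
  congr 1
  apply List.map_congr_left
  intro t _
  rw [Matrix.updateRow_apply, if_neg (h t)]

/-- tail of the `i`-cycle product, independent of row `i`. -/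
noncomputable def tailP (M : Matrix (Fin n) (Fin n) ℍ[ℝ]) (σ : Equiv.Perm (Fin n)) (i : Fin n) : ℍ[ℝ] :=
  ((List.range (minimalPeriod ⇑σ i - 1)).map
    (fun t => M ((⇑σ)^[t + 1] i) ((⇑σ)^[t + 2] i))).prod

lemma cycProd_updateRow_self (M : Matrix (Fin n) (Fin n) ℍ[ℝ]) (b : Fin n → ℍ[ℝ])
    (σ : Equiv.Perm (Fin n)) (i : Fin n) :
    cycProd (M.updateRow i b) σ i = b (σ i) * tailP M σ i := by
  unfold cycProd tailP
  obtain ⟨m, hm⟩ : ∃ m, minimalPeriod ⇑σ i = m + 1 :=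
    ⟨minimalPeriod ⇑σ i - 1, by have := per_pos σ i; omega⟩
  rw [hm, Nat.add_sub_cancel, show m + 1 = 1 + m by omega, List.range_add,
    List.map_append, List.prod_append, show List.range 1 = [0] from rfl, List.map_cons, List.map_nil,
    List.prod_cons, List.prod_nil, mul_one, Function.iterate_zero_apply,
    Function.iterate_one, Matrix.updateRow_self]
  congr 1
  rw [List.map_map]
  congr 1
  apply List.map_congr_left
  intro t ht
  rw [List.mem_range] at ht
  simp only [Function.comp_apply]
  rw [show (1 : ℕ) + t = t + 1 by omega, show t + 1 + 1 = t + 2 by omega,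
    Matrix.updateRow_apply, if_neg]
  exact iterate_ne_of_lt σ i (by omega) (by omega)

lemma perm_inv_iterate (σ : Equiv.Perm (Fin n)) (x : Fin n) {t c : ℕ} (ht : t ≤ c)
    (hc : (⇑σ)^[c] x = x) : (⇑σ⁻¹)^[t] x = (⇑σ)^[c - t] x := by
  apply Function.Injective.iterate σ.injective t
  have h1 : (⇑σ)^[t] ((⇑σ⁻¹)^[t] x) = x := by
    rw [perm_iterate_eq_pow, perm_iterate_eq_pow σ⁻¹, inv_pow]
    exact Equiv.apply_symm_apply (σ ^ t) x
  have h2 : (⇑σ)^[t] ((⇑σ)^[c - t] x) = x := by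
    rw [← Function.iterate_add_apply]
    rw [show t + (c - t) = c by omega]
    exact hc
  rw [h1, h2]

lemma per_inv (σ : Equiv.Perm (Fin n)) (x : Fin n) :
    minimalPeriod ⇑σ⁻¹ x = minimalPeriod ⇑σ x := by
  have key : ∀ τ : Equiv.Perm (Fin n), minimalPeriod ⇑τ⁻¹ x ≤ minimalPeriod ⇑τ x := by
    intro τ
    refine IsPeriodicPt.minimalPeriod_le (per_pos τ x) ?_
    show (⇑τ⁻¹)^[minimalPeriod ⇑τ x] x = x
    rw [perm_inv_iterate τ x le_rfl (iterate_per τ x), Nat.sub_self]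
    rfl
  have h2 := key σ⁻¹
  rw [inv_inv] at h2
  exact le_antisymm (key σ) h2

lemma star_cycProd {A : Matrix (Fin n) (Fin n) ℍ[ℝ]} (hA : A.IsHermitian)
    (σ : Equiv.Perm (Fin n)) (x : Fin n) :
    cycProd A σ⁻¹ x = star (cycProd A σ x) := by
  unfold cycProd
  rw [star_list_prod, per_inv, ← List.map_reverse, List.map_map]
  set c := minimalPeriod ⇑σ x with hcdef
  have hc : (⇑σ)^[c] x = x := iterate_per σ x
  have hrev : (List.range c).reverse = (List.range c).map (fun t => c - 1 - t) := by
    rw [List.range_eq_range', List.reverse_range', ← List.range_eq_range']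
    simp
  rw [hrev, List.map_map]
  congr 1
  apply List.map_congr_left
  intro t ht
  rw [List.mem_range] at ht
  simp only [Function.comp_apply]
  rw [perm_inv_iterate σ x (by omega) hc, perm_inv_iterate σ x (by omega) hc,
    show c - (t + 1) = c - 1 - t by omega, show c - 1 - t + 1 = c - t by omega]
  exact (hA.apply _ _).symm
section Aux3
open Equiv Equiv.Perm Function Quaternion Matrix

variable {n : ℕ}

lemma quat_re_mul_comm (a b : ℍ[ℝ]) : (a * b).re = (b * a).re := by
  simp only [Quaternion.re_mul]; ring

lemma add_star_swap (l1 l2 : List ℍ[ℝ]) :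
    (l1 ++ l2).prod + star ((l1 ++ l2).prod)
      = (l2 ++ l1).prod + star ((l2 ++ l1).prod) := by
  rw [self_add_star', self_add_star', List.prod_append, List.prod_append,
    quat_re_mul_comm]

lemma add_star_central (a z : ℍ[ℝ]) : (a + star a) * z = z * (a + star a) := by
  rw [show a + star a = ((2 * a.re : ℝ) : ℍ[ℝ]) from self_add_star' a]
  exact Quaternion.coe_commutes (2 * a.re) z

lemma cycProd_add_star_sameCycle (M : Matrix (Fin n) (Fin n) ℍ[ℝ])
    {σ : Equiv.Perm (Fin n)} {x y : Fin n} (h : σ.SameCycle x y) :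
    cycProd M σ y + star (cycProd M σ y) = cycProd M σ x + star (cycProd M σ x) := by
  obtain ⟨t0, ht0⟩ := sameCycle_iff_iterate.mp h
  set c := minimalPeriod ⇑σ x with hcdef
  have hcpos : 0 < c := per_pos σ x
  obtain ⟨t, htc, hty⟩ : ∃ t, t < c ∧ (⇑σ)^[t] x = y :=
    ⟨t0 % c, Nat.mod_lt _ hcpos, by rw [hcdef, iterate_mod_minimalPeriod_eq, ht0]⟩
  have hpy : minimalPeriod ⇑σ y = c := by
    rw [← hty, Function.minimalPeriod_apply_iterate (perm_mem_periodicPts σ x)]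
  unfold cycProd
  rw [hpy]
  have key : (List.range c).map (fun s => M ((⇑σ)^[s] y) ((⇑σ)^[s + 1] y))
      = (List.range (c - t)).map (fun s => M ((⇑σ)^[t + s] x) ((⇑σ)^[t + s + 1] x))
        ++ (List.range t).map (fun s => M ((⇑σ)^[s] x) ((⇑σ)^[s + 1] x)) := by
    conv_lhs => rw [show c = (c - t) + t by omega]
    rw [List.range_add, List.map_append, List.map_map]
    congr 1
    · apply List.map_congr_left; intro s hs
      rw [← hty, ← Function.iterate_add_apply, ← Function.iterate_add_apply,
        show s + t = t + s by omega, show s + 1 + t = t + s + 1 by omega]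
    · apply List.map_congr_left; intro s hs
      rw [List.mem_range] at hs
      simp only [Function.comp_apply]
      rw [← hty, ← Function.iterate_add_apply, ← Function.iterate_add_apply,
        show c - t + s + t = s + c by omega,
        show c - t + s + 1 + t = s + 1 + c by omega,
        Function.iterate_add_apply, Function.iterate_add_apply, hcdef, iterate_per]
  have keyx : (List.range c).map (fun s => M ((⇑σ)^[s] x) ((⇑σ)^[s + 1] x))
      = (List.range t).map (fun s => M ((⇑σ)^[s] x) ((⇑σ)^[s + 1] x))
        ++ (List.range (c - t)).map (fun s => M ((⇑σ)^[t + s] x) ((⇑σ)^[t + s + 1] x)) := by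
    conv_lhs => rw [show c = t + (c - t) by omega]
    rw [List.range_add, List.map_append, List.map_map]
    rfl
  rw [key, keyx]
  exact add_star_swap _ _
end Aux3
section Aux4
open Equiv Equiv.Perm Function Quaternion Matrix

variable {n : ℕ}

lemma sameCycle_iterate (σ : Equiv.Perm (Fin n)) (x : Fin n) (t : ℕ) :
    σ.SameCycle x ((⇑σ)^[t] x) :=
  sameCycle_iff_iterate.mpr ⟨t, rfl⟩

/-- Reversal of the cycle of `j`. -/
noncomputable def rhoB (σ : Equiv.Perm (Fin n)) (j : Fin n) : Equiv.Perm (Fin n) :=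
  σ * (σ.cycleOf j)⁻¹ * (σ.cycleOf j)⁻¹

lemma cycleOf_inv_apply_of_not {σ : Equiv.Perm (Fin n)} {j x : Fin n}
    (h : ¬ σ.SameCycle j x) : (σ.cycleOf j)⁻¹ x = x := by
  rw [Equiv.Perm.inv_eq_iff_eq]
  exact (Equiv.Perm.cycleOf_apply_of_not_sameCycle h).symm

lemma cycleOf_inv_apply_of {σ : Equiv.Perm (Fin n)} {j x : Fin n}
    (h : σ.SameCycle j x) : (σ.cycleOf j)⁻¹ x = σ⁻¹ x := by
  rw [Equiv.Perm.inv_eq_iff_eq, Equiv.Perm.cycleOf_apply, if_pos, (show ∀ y, σ (σ⁻¹ y) = y from fun y => Equiv.apply_symm_apply σ y)]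
  exact h.trans ⟨-1, by rw [_root_.zpow_neg_one]⟩

lemma rhoB_apply_of_not {σ : Equiv.Perm (Fin n)} {j x : Fin n}
    (h : ¬ σ.SameCycle j x) : rhoB σ j x = σ x := by
  show σ ((σ.cycleOf j)⁻¹ ((σ.cycleOf j)⁻¹ x)) = σ x
  rw [cycleOf_inv_apply_of_not h, cycleOf_inv_apply_of_not h]

lemma rhoB_apply_of {σ : Equiv.Perm (Fin n)} {j x : Fin n}
    (h : σ.SameCycle j x) : rhoB σ j x = σ⁻¹ x := by
  show σ ((σ.cycleOf j)⁻¹ ((σ.cycleOf j)⁻¹ x)) = σ⁻¹ x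
  rw [cycleOf_inv_apply_of h, cycleOf_inv_apply_of (h.trans ⟨-1, by rw [_root_.zpow_neg_one]⟩),
    (show ∀ y, σ (σ⁻¹ y) = y from fun y => Equiv.apply_symm_apply σ y)]

lemma rhoB_iterate_of_not {σ : Equiv.Perm (Fin n)} {j x : Fin n}
    (h : ¬ σ.SameCycle j x) (t : ℕ) : (⇑(rhoB σ j))^[t] x = (⇑σ)^[t] x := by
  induction t with
  | zero => rfl
  | succ t ih =>
    rw [Function.iterate_succ_apply', Function.iterate_succ_apply', ih]
    apply rhoB_apply_of_not
    intro hc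
    exact h (hc.trans (sameCycle_iterate σ x t).symm)

lemma rhoB_iterate_of {σ : Equiv.Perm (Fin n)} {j x : Fin n}
    (h : σ.SameCycle j x) (t : ℕ) : (⇑(rhoB σ j))^[t] x = (⇑σ⁻¹)^[t] x := by
  induction t with
  | zero => rfl
  | succ t ih =>
    rw [Function.iterate_succ_apply', Function.iterate_succ_apply', ih]
    apply rhoB_apply_of
    exact h.trans (sameCycle_inv.mp (sameCycle_iterate σ⁻¹ x t))

lemma rhoB_sameCycle_iff {σ : Equiv.Perm (Fin n)} {j a b : Fin n} :
    (rhoB σ j).SameCycle a b ↔ σ.SameCycle a b := by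
  rw [sameCycle_iff_iterate, sameCycle_iff_iterate]
  by_cases h : σ.SameCycle j a
  · constructor
    · rintro ⟨t, rfl⟩
      rw [rhoB_iterate_of h t]
      exact sameCycle_iff_iterate.mp (sameCycle_inv.mp (sameCycle_iterate σ⁻¹ a t))
    · rintro ⟨t, rfl⟩
      have h2 : σ⁻¹.SameCycle a ((⇑σ)^[t] a) := sameCycle_inv.mpr (sameCycle_iterate σ a t)
      obtain ⟨s, hs⟩ := sameCycle_iff_iterate.mp h2
      exact ⟨s, by rw [rhoB_iterate_of h s, hs]⟩
  · constructor
    · rintro ⟨t, rfl⟩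
      rw [rhoB_iterate_of_not h t]
      exact ⟨t, rfl⟩
    · rintro ⟨t, rfl⟩
      exact ⟨t, rhoB_iterate_of_not h t⟩

lemma rhoB_involutive (σ : Equiv.Perm (Fin n)) (j : Fin n) : rhoB (rhoB σ j) j = σ := by
  apply Equiv.ext
  intro x
  by_cases h : σ.SameCycle j x
  · have h1 : (rhoB σ j).SameCycle j x := rhoB_sameCycle_iff.mpr h
    rw [rhoB_apply_of h1, Equiv.Perm.inv_eq_iff_eq]
    rw [rhoB_apply_of (h.trans ⟨1, by rw [zpow_one]⟩), (show ∀ y, σ⁻¹ (σ y) = y from fun y => Equiv.symm_apply_apply σ y)]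
  · have h1 : ¬ (rhoB σ j).SameCycle j x := fun hc => h (rhoB_sameCycle_iff.mp hc)
    rw [rhoB_apply_of_not h1, rhoB_apply_of_not h]

lemma rhoB_sign (σ : Equiv.Perm (Fin n)) (j : Fin n) :
    Equiv.Perm.sign (rhoB σ j) = Equiv.Perm.sign σ := by
  unfold rhoB
  rw [_root_.map_mul, _root_.map_mul, mul_assoc]
  have h1 : Equiv.Perm.sign (σ.cycleOf j)⁻¹ * Equiv.Perm.sign (σ.cycleOf j)⁻¹ = 1 :=
    Int.units_mul_self _
  rw [h1, mul_one]
section Aux5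
open Equiv Equiv.Perm Function Quaternion Matrix

variable {n : ℕ} {σ : Equiv.Perm (Fin n)} {i j : Fin n}

lemma merge_iter1 (h : ¬ σ.SameCycle i j) :
    ∀ t, 1 ≤ t → t ≤ minimalPeriod ⇑σ j →
      (⇑(σ * Equiv.swap i j))^[t] i = (⇑σ)^[t] j := by
  intro t
  induction t with
  | zero => intro h1 _; omega
  | succ t ih =>
    intro _ hle
    rcases Nat.eq_zero_or_pos t with rfl | ht
    · rw [Function.iterate_succ_apply', Function.iterate_succ_apply',
        Function.iterate_zero_apply, Function.iterate_zero_apply,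
        Equiv.Perm.mul_apply, Equiv.swap_apply_left]
    · rw [Function.iterate_succ_apply', Function.iterate_succ_apply',
        ih ht (by omega), Equiv.Perm.mul_apply, Equiv.swap_apply_of_ne_of_ne]
      · exact fun he => h (sameCycle_iff_iterate.mpr ⟨t, he⟩).symm
      · exact iterate_ne_of_lt σ j ht (by omega)

lemma merge_at_d (h : ¬ σ.SameCycle i j) :
    (⇑(σ * Equiv.swap i j))^[minimalPeriod ⇑σ j] i = j := by
  rw [merge_iter1 h _ (per_pos σ j) le_rfl]
  exact iterate_per σ j

lemma merge_iter2 (h : ¬ σ.SameCycle i j) :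
    ∀ t, 1 ≤ t → t ≤ minimalPeriod ⇑σ i →
      (⇑(σ * Equiv.swap i j))^[minimalPeriod ⇑σ j + t] i = (⇑σ)^[t] i := by
  intro t
  induction t with
  | zero => intro h1 _; omega
  | succ t ih =>
    intro _ hle
    rcases Nat.eq_zero_or_pos t with rfl | ht
    · rw [Function.iterate_succ_apply', merge_at_d h, Function.iterate_one,
        Equiv.Perm.mul_apply, Equiv.swap_apply_right]
    · rw [show minimalPeriod ⇑σ j + (t + 1) = (minimalPeriod ⇑σ j + t) + 1 by omega,
        Function.iterate_succ_apply', Function.iterate_succ_apply',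
        ih ht (by omega), Equiv.Perm.mul_apply, Equiv.swap_apply_of_ne_of_ne]
      · exact iterate_ne_of_lt σ i ht (by omega)
      · exact fun he => h (sameCycle_iff_iterate.mpr ⟨t, he⟩)

lemma merge_per (h : ¬ σ.SameCycle i j) :
    minimalPeriod ⇑(σ * Equiv.swap i j) i
      = minimalPeriod ⇑σ j + minimalPeriod ⇑σ i := by
  have hdp : 0 < minimalPeriod ⇑σ j := per_pos σ j
  have hcp : 0 < minimalPeriod ⇑σ i := per_pos σ i
  have hp : (⇑(σ * Equiv.swap i j))^[minimalPeriod ⇑σ j + minimalPeriod ⇑σ i] i = i := by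
    rw [merge_iter2 h _ hcp le_rfl]
    exact iterate_per σ i
  have hle : minimalPeriod ⇑(σ * Equiv.swap i j) i
      ≤ minimalPeriod ⇑σ j + minimalPeriod ⇑σ i :=
    IsPeriodicPt.minimalPeriod_le (by omega) hp
  by_contra hne
  have hm0 : 0 < minimalPeriod ⇑(σ * Equiv.swap i j) i := per_pos _ _
  have him : (⇑(σ * Equiv.swap i j))^[minimalPeriod ⇑(σ * Equiv.swap i j) i] i = i :=
    iterate_per _ _
  rcases le_or_gt (minimalPeriod ⇑(σ * Equiv.swap i j) i) (minimalPeriod ⇑σ j) with h1 | h1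
  · rw [merge_iter1 h _ hm0 h1] at him
    exact h (sameCycle_iff_iterate.mpr ⟨_, him⟩).symm
  · have h2 : (⇑(σ * Equiv.swap i j))^[minimalPeriod ⇑σ j
        + (minimalPeriod ⇑(σ * Equiv.swap i j) i - minimalPeriod ⇑σ j)] i = i := by
      rw [show minimalPeriod ⇑σ j
        + (minimalPeriod ⇑(σ * Equiv.swap i j) i - minimalPeriod ⇑σ j)
        = minimalPeriod ⇑(σ * Equiv.swap i j) i by omega]
      exact him
    rw [merge_iter2 h _ (by omega) (by omega)] at h2
    exact iterate_ne_of_lt σ i (by omega) (by omega) h2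

lemma merge_iterate_off {x : Fin n} (hxi : ¬ σ.SameCycle x i) (hxj : ¬ σ.SameCycle x j)
    (t : ℕ) : (⇑(σ * Equiv.swap i j))^[t] x = (⇑σ)^[t] x := by
  induction t with
  | zero => rfl
  | succ t ih =>
    rw [Function.iterate_succ_apply', Function.iterate_succ_apply', ih,
      Equiv.Perm.mul_apply, Equiv.swap_apply_of_ne_of_ne]
    · exact fun he => hxi (sameCycle_iff_iterate.mpr ⟨t, he⟩)
    · exact fun he => hxj (sameCycle_iff_iterate.mpr ⟨t, he⟩)

lemma merge_sameCycle_off {x : Fin n} (hxi : ¬ σ.SameCycle x i) (hxj : ¬ σ.SameCycle x j)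
    (y : Fin n) : (σ * Equiv.swap i j).SameCycle x y ↔ σ.SameCycle x y := by
  rw [sameCycle_iff_iterate, sameCycle_iff_iterate]
  constructor
  · rintro ⟨t, rfl⟩; exact ⟨t, (merge_iterate_off hxi hxj t).symm⟩
  · rintro ⟨t, rfl⟩; exact ⟨t, merge_iterate_off hxi hxj t⟩

lemma merge_sameCycle_i (h : ¬ σ.SameCycle i j) (x : Fin n) :
    (σ * Equiv.swap i j).SameCycle i x ↔ (σ.SameCycle i x ∨ σ.SameCycle j x) := by
  have hdp : 0 < minimalPeriod ⇑σ j := per_pos σ j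
  have hcp : 0 < minimalPeriod ⇑σ i := per_pos σ i
  constructor
  · intro hx
    obtain ⟨t0, ht0⟩ := sameCycle_iff_iterate.mp hx
    have hxt : (⇑(σ * Equiv.swap i j))^[t0 % (minimalPeriod ⇑σ j + minimalPeriod ⇑σ i)] i
        = x := by
      rw [← merge_per h, iterate_mod_minimalPeriod_eq, ht0]
    set t := t0 % (minimalPeriod ⇑σ j + minimalPeriod ⇑σ i) with htdef
    have htlt : t < minimalPeriod ⇑σ j + minimalPeriod ⇑σ i := Nat.mod_lt _ (by omega)
    rcases Nat.eq_zero_or_pos t with hz | ht0p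
    · left; rw [← hxt, hz]; exact Equiv.Perm.SameCycle.refl σ i
    rcases le_or_gt t (minimalPeriod ⇑σ j) with h1 | h1
    · right; rw [← hxt, merge_iter1 h t ht0p h1]; exact sameCycle_iterate σ j t
    · left
      rw [← hxt, show t = minimalPeriod ⇑σ j + (t - minimalPeriod ⇑σ j) by omega,
        merge_iter2 h _ (by omega) (by omega)]
      exact sameCycle_iterate σ i _
  · intro hx
    rcases hx with hx | hx
    · obtain ⟨t0, ht0⟩ := sameCycle_iff_iterate.mp hx
      have hxt : (⇑σ)^[t0 % minimalPeriod ⇑σ i] i = x := by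
        rw [iterate_mod_minimalPeriod_eq, ht0]
      set t := t0 % minimalPeriod ⇑σ i with htdef
      rcases Nat.eq_zero_or_pos t with hz | ht0p
      · rw [hz] at hxt; rw [← hxt]; exact Equiv.Perm.SameCycle.refl _ i
      · refine sameCycle_iff_iterate.mpr ⟨minimalPeriod ⇑σ j + t, ?_⟩
        rw [merge_iter2 h t ht0p (le_of_lt (Nat.mod_lt _ hcp)), hxt]
    · obtain ⟨t0, ht0⟩ := sameCycle_iff_iterate.mp hx
      have hxt : (⇑σ)^[t0 % minimalPeriod ⇑σ j] j = x := by
        rw [iterate_mod_minimalPeriod_eq, ht0]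
      set t := t0 % minimalPeriod ⇑σ j with htdef
      rcases Nat.eq_zero_or_pos t with hz | ht0p
      · rw [hz] at hxt
        refine sameCycle_iff_iterate.mpr ⟨minimalPeriod ⇑σ j, ?_⟩
        rw [merge_at_d h, ← hxt]; rfl
      · refine sameCycle_iff_iterate.mpr ⟨t, ?_⟩
        rw [merge_iter1 h t ht0p (le_of_lt (Nat.mod_lt _ hdp)), hxt]

lemma split_not_sameCycle (hsc : σ.SameCycle i j) (hij : i ≠ j) :
    ¬ (σ * Equiv.swap i j).SameCycle i j := by
  have hcp : 0 < minimalPeriod ⇑σ i := per_pos σ i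
  obtain ⟨m0, hm0⟩ := sameCycle_iff_iterate.mp hsc
  have hm : (⇑σ)^[m0 % minimalPeriod ⇑σ i] i = j := by
    rw [iterate_mod_minimalPeriod_eq, hm0]
  set m := m0 % minimalPeriod ⇑σ i with hmdef
  have hmlt : m < minimalPeriod ⇑σ i := Nat.mod_lt _ hcp
  have hm1 : 1 ≤ m := by
    rcases Nat.eq_zero_or_pos m with hz | h1
    · rw [hz] at hm; exact absurd hm hij
    · exact h1
  have hne_j : ∀ t, 1 ≤ t → t < m → (⇑σ)^[t] i ≠ j := by
    intro t ht1 htm he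
    have h2 : (⇑σ)^[t] ((⇑σ)^[m - t] i) = (⇑σ)^[t] i := by
      rw [← Function.iterate_add_apply, show t + (m - t) = m by omega, hm, he]
    have h3 := Function.Injective.iterate σ.injective t h2
    exact iterate_ne_of_lt σ i (by omega) (by omega) h3
  have claim : ∀ t, 1 ≤ t → t ≤ m → (⇑(σ * Equiv.swap i j))^[t] j = (⇑σ)^[t] i := by
    intro t
    induction t with
    | zero => intro h1 _; omega
    | succ t ih =>
      intro _ hle
      rcases Nat.eq_zero_or_pos t with rfl | ht
      · rw [Function.iterate_succ_apply', Function.iterate_succ_apply',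
          Function.iterate_zero_apply, Function.iterate_zero_apply,
          Equiv.Perm.mul_apply, Equiv.swap_apply_right]
      · rw [Function.iterate_succ_apply', Function.iterate_succ_apply',
          ih ht (by omega), Equiv.Perm.mul_apply, Equiv.swap_apply_of_ne_of_ne]
        · exact iterate_ne_of_lt σ i ht (by omega)
        · exact hne_j t ht (by omega)
  have hper : (⇑(σ * Equiv.swap i j))^[m] j = j := by
    rw [claim m hm1 le_rfl, hm]
  have hple : minimalPeriod ⇑(σ * Equiv.swap i j) j ≤ m :=
    IsPeriodicPt.minimalPeriod_le (by omega) hper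
  intro hc
  obtain ⟨t0, ht0⟩ := sameCycle_iff_iterate.mp hc.symm
  have hti : (⇑(σ * Equiv.swap i j))^[t0 % minimalPeriod ⇑(σ * Equiv.swap i j) j] j = i := by
    rw [iterate_mod_minimalPeriod_eq, ht0]
  set t := t0 % minimalPeriod ⇑(σ * Equiv.swap i j) j with htdef
  have htlt : t < minimalPeriod ⇑(σ * Equiv.swap i j) j :=
    Nat.mod_lt _ (per_pos _ _)
  rcases Nat.eq_zero_or_pos t with hz | ht1
  · rw [hz, Function.iterate_zero_apply] at hti; exact hij hti.symm
  · rw [claim t ht1 (by omega)] at hti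
    exact iterate_ne_of_lt σ i ht1 (by omega) hti

lemma merge_sameCycle_ij (h : ¬ σ.SameCycle i j) : (σ * Equiv.swap i j).SameCycle i j :=
  (merge_sameCycle_i h j).mpr (Or.inr (Equiv.Perm.SameCycle.refl σ j))

end Aux5
section Aux6
open Equiv Equiv.Perm Function Quaternion Matrix

variable {n : ℕ} {σ : Equiv.Perm (Fin n)} {i j : Fin n}

/-- The smallest element of the cycle of `j`. -/
noncomputable def cycMin (σ : Equiv.Perm (Fin n)) (j : Fin n) : Fin n :=
  (Finset.univ.filter fun x => σ.SameCycle j x).min'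
    ⟨j, by simp [Equiv.Perm.SameCycle.refl]⟩

lemma cycMin_sameCycle (σ : Equiv.Perm (Fin n)) (j : Fin n) :
    σ.SameCycle j (cycMin σ j) := by
  have := Finset.min'_mem (Finset.univ.filter fun x => σ.SameCycle j x)
    ⟨j, by simp [Equiv.Perm.SameCycle.refl]⟩
  simpa [cycMin] using this

lemma cycMin_le {y : Fin n} (hy : σ.SameCycle j y) : cycMin σ j ≤ y :=
  Finset.min'_le _ _ (by simpa using hy)

lemma cycMin_mem_leaders (h : ¬ σ.SameCycle i j) : cycMin σ j ∈ leaders σ i := by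
  rw [mem_leaders_iff]
  refine ⟨fun y hy => cycMin_le ((cycMin_sameCycle σ j).trans hy), fun hc => ?_⟩
  exact h (hc.trans (cycMin_sameCycle σ j).symm)

lemma leaders_rhoB : leaders (rhoB σ j) i = leaders σ i :=
  leaders_congr (fun _ _ => rhoB_sameCycle_iff) i

lemma leaders_merge (h : ¬ σ.SameCycle i j) :
    leaders (σ * Equiv.swap i j) i
      = (leaders σ i).filter (fun x => decide (x ≠ cycMin σ j)) := by
  unfold leaders
  rw [List.filter_filter]
  apply List.filter_congr
  intro x _
  rw [Bool.eq_iff_iff]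
  simp only [Bool.and_eq_true, Bool.not_eq_true', decide_eq_true_eq]
  have hBfalse : ∀ (τ : Equiv.Perm (Fin n)) (a b : Fin n),
      inCycleB τ a b = false ↔ ¬ τ.SameCycle a b := by
    intro τ a b
    constructor
    · intro hf hc; rw [inCycleB_iff.mpr hc] at hf; exact Bool.false_ne_true hf.symm
    · intro hc; cases hb : inCycleB τ a b
      · rfl
      · exact absurd (inCycleB_iff.mp hb) hc
  rw [hBfalse, hBfalse, isLeaderB_iff, isLeaderB_iff]
  constructor
  · rintro ⟨hlead, hnc⟩
    have h12 : ¬ (σ.SameCycle i x ∨ σ.SameCycle j x) := fun hc =>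
      hnc ((merge_sameCycle_i h x).mpr hc)
    push_neg at h12
    obtain ⟨h1, h2⟩ := h12
    have h1' : ¬ σ.SameCycle x i := fun hc => h1 hc.symm
    have h2' : ¬ σ.SameCycle x j := fun hc => h2 hc.symm
    refine ⟨?_, fun y hy => hlead y ((merge_sameCycle_off h1' h2' y).mpr hy), h1⟩
    intro he
    exact h2' (by rw [he]; exact (cycMin_sameCycle σ j).symm)
  · rintro ⟨hxl0, hlead, h1⟩
    have h2 : ¬ σ.SameCycle j x := by
      intro hc
      exact hxl0 (le_antisymm (hlead _ (hc.symm.trans (cycMin_sameCycle σ j)))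
        (cycMin_le hc))
    have h1' : ¬ σ.SameCycle x i := fun hc => h1 hc.symm
    have h2' : ¬ σ.SameCycle x j := fun hc => h2 hc.symm
    refine ⟨fun y hy => hlead y ((merge_sameCycle_off h1' h2' y).mp hy), ?_⟩
    intro hc
    rcases (merge_sameCycle_i h x).mp hc with hc1 | hc2
    · exact h1 hc1
    · exact h2 hc2

lemma sign_mul_swap (hij : i ≠ j) (σ : Equiv.Perm (Fin n)) :
    Equiv.Perm.sign (σ * Equiv.swap i j) = - Equiv.Perm.sign σ := by
  rw [_root_.map_mul, Equiv.Perm.sign_swap hij, mul_neg, mul_one]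

lemma merge_cycProd (A : Matrix (Fin n) (Fin n) ℍ[ℝ]) (h : ¬ σ.SameCycle i j)
    (hij : j ≠ i) :
    cycProd (A.updateRow i (A j)) (σ * Equiv.swap i j) i
      = cycProd A σ j * cycProd (A.updateRow i (A j)) σ i := by
  have hdp : 0 < minimalPeriod ⇑σ j := per_pos σ j
  have hcp : 0 < minimalPeriod ⇑σ i := per_pos σ i
  unfold cycProd
  rw [merge_per h, List.range_add, List.map_append, List.prod_append, List.map_map]
  congr 1
  · congr 1
    apply List.map_congr_left
    intro t ht
    rw [List.mem_range] at ht
    rcases Nat.eq_zero_or_pos t with rfl | ht1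
    · rw [Function.iterate_zero_apply, Function.iterate_zero_apply,
        show (0 : ℕ) + 1 = 1 from rfl, merge_iter1 h 1 le_rfl (by omega),
        Matrix.updateRow_self]
    · rw [merge_iter1 h t ht1 (by omega), merge_iter1 h (t + 1) (by omega) (by omega),
        Matrix.updateRow_apply, if_neg]
      exact fun he => h (sameCycle_iff_iterate.mpr ⟨t, he⟩).symm
  · congr 1
    apply List.map_congr_left
    intro t ht
    rw [List.mem_range] at ht
    simp only [Function.comp_apply]
    rcases Nat.eq_zero_or_pos t with rfl | ht1
    · rw [Nat.add_zero, merge_at_d h,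
        show minimalPeriod ⇑σ j + 0 + 1 = minimalPeriod ⇑σ j + 1 by omega,
        merge_iter2 h 1 le_rfl (by omega), Function.iterate_zero_apply,
        Function.iterate_one, Matrix.updateRow_self, Matrix.updateRow_apply, if_neg hij]
    · rw [show minimalPeriod ⇑σ j + t + 1 = minimalPeriod ⇑σ j + (t + 1) by omega,
        merge_iter2 h t ht1 (by omega), merge_iter2 h (t + 1) (by omega) (by omega)]

end Aux6
section Aux7
open Equiv Equiv.Perm Function Quaternion Matrix

variable {n : ℕ}

lemma four_group (a b c d : ℍ[ℝ]) : a + b + c + d = (a + b) + (c + d) := by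
  rw [add_assoc (a + b) c d]

lemma quartet_algebra_r (ε c W La Lb p q : ℍ[ℝ]) (hpq : p + star p = q + star q) :
    ε * (c * W * (La * (p * Lb))) + ε * (c * W * (La * (star p * Lb)))
      + -ε * (c * (q * W) * (La * Lb)) + -ε * (c * (star q * W) * (La * Lb)) = 0 := by
  have e1 : La * (p * Lb) + La * (star p * Lb) = (p + star p) * (La * Lb) := by
    rw [← mul_add, ← add_mul, ← mul_assoc, ← add_star_central p La, mul_assoc]
  have h12 : ε * (c * W * (La * (p * Lb))) + ε * (c * W * (La * (star p * Lb)))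
      = ε * (c * W * ((p + star p) * (La * Lb))) := by
    rw [← mul_add, ← mul_add, e1]
  have h34 : -ε * (c * (q * W) * (La * Lb)) + -ε * (c * (star q * W) * (La * Lb))
      = -(ε * (c * W * ((p + star p) * (La * Lb)))) := by
    rw [neg_mul, neg_mul, ← neg_add, ← mul_add, ← add_mul, ← mul_add, ← add_mul, ← hpq]
    have : c * ((p + star p) * W) * (La * Lb) = c * W * ((p + star p) * (La * Lb)) := by
      rw [add_star_central p W, ← mul_assoc c W, mul_assoc (c * W)]
    rw [this]
  rw [four_group, h12, h34, add_neg_cancel]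

lemma quartet_algebra_c (ε c W Ma Mb p q : ℍ[ℝ]) (hpq : p + star p = q + star q) :
    ε * (Mb * (p * Ma) * (c * W)) + ε * (Mb * (star p * Ma) * (c * W))
      + -ε * (Mb * Ma * (c * (q * W))) + -ε * (Mb * Ma * (c * (star q * W))) = 0 := by
  have e1 : Mb * (p * Ma) + Mb * (star p * Ma) = (p + star p) * (Mb * Ma) := by
    rw [← mul_add, ← add_mul, ← mul_assoc, ← add_star_central p Mb, mul_assoc]
  have h12 : ε * (Mb * (p * Ma) * (c * W)) + ε * (Mb * (star p * Ma) * (c * W))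
      = ε * ((p + star p) * (Mb * Ma) * (c * W)) := by
    rw [← mul_add, ← add_mul, e1]
  have h34 : -ε * (Mb * Ma * (c * (q * W))) + -ε * (Mb * Ma * (c * (star q * W)))
      = -(ε * ((p + star p) * (Mb * Ma) * (c * W))) := by
    rw [neg_mul, neg_mul, ← neg_add, ← mul_add, ← mul_add, ← mul_add, ← add_mul, ← hpq]
    have : Mb * Ma * (c * ((p + star p) * W)) = (p + star p) * (Mb * Ma) * (c * W) := by
      rw [add_star_central p W, ← mul_assoc c W, ← mul_assoc (Mb * Ma) (c * W),
        ← add_star_central p (Mb * Ma * (c * W)), ← mul_assoc (p + star p) (Mb * Ma) (c * W)]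
    rw [this]
  rw [four_group, h12, h34, add_neg_cancel]

end Aux7
section Aux8
open Equiv Equiv.Perm Function Quaternion Matrix

variable {n : ℕ}

noncomputable def rterm (A : Matrix (Fin n) (Fin n) ℍ[ℝ]) (i j : Fin n) (c : ℍ[ℝ])
    (σ : Equiv.Perm (Fin n)) : ℍ[ℝ] :=
  ((Equiv.Perm.sign σ : ℤ) : ℍ[ℝ]) *
    (c * cycProd (A.updateRow i (A j)) σ i * ((leaders σ i).map (cycProd A σ)).prod)

noncomputable def cterm (A : Matrix (Fin n) (Fin n) ℍ[ℝ]) (i j : Fin n) (c : ℍ[ℝ])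
    (σ : Equiv.Perm (Fin n)) : ℍ[ℝ] :=
  ((Equiv.Perm.sign σ : ℤ) : ℍ[ℝ]) *
    (((leaders σ i).reverse.map (cycProd A σ)).prod
      * (c * cycProd (A.updateRow i (A j)) σ i))

lemma quartet (A : Matrix (Fin n) (Fin n) ℍ[ℝ]) (hA : A.IsHermitian) {i j : Fin n}
    (hij : j ≠ i) (c : ℍ[ℝ]) (σ : Equiv.Perm (Fin n)) (h : ¬ σ.SameCycle i j) :
    (rterm A i j c σ + rterm A i j c (rhoB σ j)
      + rterm A i j c (σ * Equiv.swap i j)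
      + rterm A i j c (rhoB σ j * Equiv.swap i j) = 0) ∧
    (cterm A i j c σ + cterm A i j c (rhoB σ j)
      + cterm A i j c (σ * Equiv.swap i j)
      + cterm A i j c (rhoB σ j * Equiv.swap i j) = 0) := by
  have hij' : i ≠ j := fun he => hij he.symm
  set B := A.updateRow i (A j) with hB
  set σ' := rhoB σ j with hσ'
  have hSC' : ∀ a b : Fin n, σ'.SameCycle a b ↔ σ.SameCycle a b := fun a b =>
    rhoB_sameCycle_iff
  have h' : ¬ σ'.SameCycle i j := fun hc => h ((hSC' i j).mp hc)
  set l0 := cycMin σ j with hl0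
  have hl0j : σ.SameCycle j l0 := cycMin_sameCycle σ j
  have hl0' : cycMin σ' j = l0 := le_antisymm
    (cycMin_le ((hSC' j _).mpr hl0j))
    (cycMin_le ((hSC' j _).mp (cycMin_sameCycle σ' j)))
  have hl0mem : l0 ∈ leaders σ i := cycMin_mem_leaders h
  obtain ⟨la, lb, heq⟩ := List.append_of_mem hl0mem
  have hnd : (la ++ l0 :: lb).Nodup := heq ▸ leaders_nodup σ i
  rw [List.nodup_append] at hnd
  have hl0b : l0 ∉ lb := (List.nodup_cons.mp hnd.2.1).1
  have hl0a : l0 ∉ la := fun hc => hnd.2.2 l0 hc l0 List.mem_cons_self rfl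
  have hmem_la : ∀ x ∈ la, x ∈ leaders σ i ∧ x ≠ l0 := by
    intro x hx
    refine ⟨by rw [heq]; exact List.mem_append_left _ hx, fun he => hl0a (he ▸ hx)⟩
  have hmem_lb : ∀ x ∈ lb, x ∈ leaders σ i ∧ x ≠ l0 := by
    intro x hx
    refine ⟨by rw [heq]; exact List.mem_append_right _ (List.mem_cons_of_mem _ hx),
      fun he => hl0b (he ▸ hx)⟩
  set P := cycProd A σ with hPdef
  have hxfacts : ∀ x, x ∈ leaders σ i → x ≠ l0 →
      cycProd A σ' x = P x
      ∧ cycProd A (σ * Equiv.swap i j) x = P x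
      ∧ cycProd A (σ' * Equiv.swap i j) x = cycProd A σ' x := by
    intro x hxmem hxne
    obtain ⟨hxlead, hxic⟩ := mem_leaders_iff.mp hxmem
    have hxj : ¬ σ.SameCycle j x := by
      intro hc
      exact hxne (le_antisymm (hxlead _ (hc.symm.trans hl0j)) (cycMin_le hc))
    have hxi' : ¬ σ.SameCycle x i := fun hc => hxic hc.symm
    have hxj' : ¬ σ.SameCycle x j := fun hc => hxj hc.symm
    exact ⟨cycProd_congr A (rhoB_iterate_of_not hxj),
      cycProd_congr A (merge_iterate_off hxi' hxj'),
      cycProd_congr A (merge_iterate_off (fun hc => hxi' ((hSC' x i).mp hc))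
        (fun hc => hxj' ((hSC' x j).mp hc)))⟩
  set W := cycProd B σ i with hWdef
  set p := P l0 with hpdef
  set Q := P j with hQdef
  have hstarp : cycProd A σ' l0 = star p :=
    (cycProd_congr A (rhoB_iterate_of hl0j)).trans (star_cycProd hA σ l0)
  have hstarQ : cycProd A σ' j = star Q :=
    (cycProd_congr A (rhoB_iterate_of (Equiv.Perm.SameCycle.refl σ j))).trans
      (star_cycProd hA σ j)
  have hW' : cycProd B σ' i = W :=
    cycProd_congr B (rhoB_iterate_of_not (fun hc => h hc.symm))
  have hQW1 : cycProd B (σ * Equiv.swap i j) i = Q * W := merge_cycProd A h hij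
  have hQW2 : cycProd B (σ' * Equiv.swap i j) i = star Q * W := by
    rw [merge_cycProd A h' hij, hstarQ, hW']
  have hfilter : (la ++ l0 :: lb).filter (fun x => decide (x ≠ l0)) = la ++ lb := by
    have ha : la.filter (fun x => decide (x ≠ l0)) = la :=
      List.filter_eq_self.mpr (fun x hx => decide_eq_true (fun he => hl0a (he ▸ hx)))
    have hb : lb.filter (fun x => decide (x ≠ l0)) = lb :=
      List.filter_eq_self.mpr (fun x hx => decide_eq_true (fun he => hl0b (he ▸ hx)))
    rw [List.filter_append, List.filter_cons, ha, hb]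
    simp
  have hlead1 : leaders (σ * Equiv.swap i j) i = la ++ lb := by
    rw [leaders_merge h, ← hl0, heq, hfilter]
  have hlead2 : leaders (σ' * Equiv.swap i j) i = la ++ lb := by
    rw [leaders_merge h', hl0', leaders_rhoB, heq, hfilter]
  have hmapτ : ∀ τ : Equiv.Perm (Fin n),
      (∀ x, x ∈ leaders σ i → x ≠ l0 → cycProd A τ x = P x) →
      la.map (cycProd A τ) = la.map P ∧ lb.map (cycProd A τ) = lb.map P := by
    intro τ hτ
    constructor
    · apply List.map_congr_left; intro x hx
      exact hτ x (hmem_la x hx).1 (hmem_la x hx).2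
    · apply List.map_congr_left; intro x hx
      exact hτ x (hmem_lb x hx).1 (hmem_lb x hx).2
  obtain ⟨hmap1a, hmap1b⟩ := hmapτ σ' (fun x h1 h2 => (hxfacts x h1 h2).1)
  obtain ⟨hmap2a, hmap2b⟩ := hmapτ (σ * Equiv.swap i j)
    (fun x h1 h2 => (hxfacts x h1 h2).2.1)
  obtain ⟨hmap3a, hmap3b⟩ := hmapτ (σ' * Equiv.swap i j)
    (fun x h1 h2 => ((hxfacts x h1 h2).2.2).trans (hxfacts x h1 h2).1)
  set ε := ((Equiv.Perm.sign σ : ℤ) : ℍ[ℝ]) with hεdef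
  have hsign' : ((Equiv.Perm.sign σ' : ℤ) : ℍ[ℝ]) = ε := by
    rw [hσ', rhoB_sign]
  have hsign1 : ((Equiv.Perm.sign (σ * Equiv.swap i j) : ℤ) : ℍ[ℝ]) = -ε := by
    rw [sign_mul_swap hij' σ, Units.val_neg, Int.cast_neg]
  have hsign2 : ((Equiv.Perm.sign (σ' * Equiv.swap i j) : ℤ) : ℍ[ℝ]) = -ε := by
    rw [sign_mul_swap hij' σ', Units.val_neg, Int.cast_neg, hσ', rhoB_sign]
  set La := (la.map P).prod with hLa
  set Lb := (lb.map P).prod with hLb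
  set Ma := (la.reverse.map P).prod with hMa
  set Mb := (lb.reverse.map P).prod with hMb
  have hpq : p + star p = Q + star Q := cycProd_add_star_sameCycle A hl0j
  have t1 : rterm A i j c σ = ε * (c * W * (La * (p * Lb))) := by
    unfold rterm
    rw [heq, List.map_append, List.prod_append, List.map_cons, List.prod_cons]
  have t2 : rterm A i j c σ' = ε * (c * W * (La * (star p * Lb))) := by
    unfold rterm
    rw [hsign', hW', leaders_rhoB, heq, List.map_append, List.prod_append,
      List.map_cons, List.prod_cons, hmap1a, hmap1b, hstarp]
  have t3 : rterm A i j c (σ * Equiv.swap i j) = -ε * (c * (Q * W) * (La * Lb)) := by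
    unfold rterm
    rw [hsign1, hQW1, hlead1, List.map_append, List.prod_append, hmap2a, hmap2b]
  have t4 : rterm A i j c (σ' * Equiv.swap i j)
      = -ε * (c * (star Q * W) * (La * Lb)) := by
    unfold rterm
    rw [hsign2, hQW2, hlead2, List.map_append, List.prod_append, hmap3a, hmap3b]
  have u1 : cterm A i j c σ = ε * (Mb * (p * Ma) * (c * W)) := by
    unfold cterm
    rw [heq, List.reverse_append, List.reverse_cons, List.append_assoc,
      List.singleton_append, List.map_append, List.prod_append, List.map_cons,
      List.prod_cons]
  have u2 : cterm A i j c σ' = ε * (Mb * (star p * Ma) * (c * W)) := by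
    unfold cterm
    rw [hsign', hW', leaders_rhoB, heq, List.reverse_append, List.reverse_cons,
      List.append_assoc, List.singleton_append, List.map_append, List.prod_append,
      List.map_cons, List.prod_cons, hstarp, List.map_reverse, List.map_reverse,
      hmap1a, hmap1b, ← List.map_reverse, ← List.map_reverse]
  have u3 : cterm A i j c (σ * Equiv.swap i j) = -ε * (Mb * Ma * (c * (Q * W))) := by
    unfold cterm
    rw [hsign1, hQW1, hlead1, List.reverse_append, List.map_append, List.prod_append,
      List.map_reverse, List.map_reverse, hmap2a, hmap2b, ← List.map_reverse,
      ← List.map_reverse]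
  have u4 : cterm A i j c (σ' * Equiv.swap i j)
      = -ε * (Mb * Ma * (c * (star Q * W))) := by
    unfold cterm
    rw [hsign2, hQW2, hlead2, List.reverse_append, List.map_append, List.prod_append,
      List.map_reverse, List.map_reverse, hmap3a, hmap3b,
      ← List.map_reverse, ← List.map_reverse]
  constructor
  · rw [t1, t2, t3, t4]
    exact quartet_algebra_r ε c W La Lb p Q hpq
  · rw [u1, u2, u3, u4]
    exact quartet_algebra_c ε c W Ma Mb p Q hpq

end Aux8
section Aux9
open Equiv Equiv.Perm Function Quaternion Matrix

variable {n : ℕ}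

open scoped Classical in
/-- Global pairing: reverse the "segment" associated to `j` relative to `i`. -/
noncomputable def rho (i j : Fin n) (σ : Equiv.Perm (Fin n)) : Equiv.Perm (Fin n) :=
  if σ.SameCycle i j then rhoB (σ * Equiv.swap i j) j * Equiv.swap i j else rhoB σ j

lemma rho_involutive (i j : Fin n) (hij : i ≠ j) : Function.Involutive (rho i j) := by
  intro σ
  unfold rho
  by_cases h : σ.SameCycle i j
  · rw [if_pos h]
    have h1 : ¬ (σ * Equiv.swap i j).SameCycle i j := split_not_sameCycle h hij
    have h2 : ¬ (rhoB (σ * Equiv.swap i j) j).SameCycle i j :=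
      fun hc => h1 (rhoB_sameCycle_iff.mp hc)
    have h3 : (rhoB (σ * Equiv.swap i j) j * Equiv.swap i j).SameCycle i j :=
      merge_sameCycle_ij h2
    rw [if_pos h3, mul_assoc, Equiv.swap_mul_self, mul_one, rhoB_involutive,
      mul_assoc, Equiv.swap_mul_self, mul_one]
  · rw [if_neg h]
    have h2 : ¬ (rhoB σ j).SameCycle i j := fun hc => h (rhoB_sameCycle_iff.mp hc)
    rw [if_neg h2, rhoB_involutive]

lemma main_sum_zero {i j : Fin n} (hij' : i ≠ j) (T : Equiv.Perm (Fin n) → ℍ[ℝ])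
    (hT : ∀ σ, ¬ σ.SameCycle i j →
      T σ + T (rhoB σ j) + T (σ * Equiv.swap i j)
        + T (rhoB σ j * Equiv.swap i j) = 0) :
    ∑ σ : Equiv.Perm (Fin n), T σ = 0 := by
  classical
  have hbij := (rho_involutive i j hij').bijective
  have hsum1 : ∑ σ : Equiv.Perm (Fin n), T (rho i j σ) = ∑ σ : Equiv.Perm (Fin n), T σ :=
    Fintype.sum_bijective _ hbij _ _ (fun σ => rfl)
  have hG : ∑ σ : Equiv.Perm (Fin n), (T σ + T (rho i j σ)) = 0 := by
    apply Finset.sum_involution (fun σ _ => σ * Equiv.swap i j)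
    · intro σ _
      by_cases h : σ.SameCycle i j
      · have h1 : ¬ (σ * Equiv.swap i j).SameCycle i j := split_not_sameCycle h hij'
        have key := hT (σ * Equiv.swap i j) h1
        rw [mul_assoc, Equiv.swap_mul_self, mul_one] at key
        have hr1 : rho i j σ = rhoB (σ * Equiv.swap i j) j * Equiv.swap i j := if_pos h
        have hr2 : rho i j (σ * Equiv.swap i j) = rhoB (σ * Equiv.swap i j) j := if_neg h1
        rw [hr1, hr2]
        calc T σ + T (rhoB (σ * Equiv.swap i j) j * Equiv.swap i j)
              + (T (σ * Equiv.swap i j) + T (rhoB (σ * Equiv.swap i j) j))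
            = T (σ * Equiv.swap i j) + T (rhoB (σ * Equiv.swap i j) j) + T σ
              + T (rhoB (σ * Equiv.swap i j) j * Equiv.swap i j) := by abel
          _ = 0 := key
      · have h3 : (σ * Equiv.swap i j).SameCycle i j := merge_sameCycle_ij h
        have hr1 : rho i j σ = rhoB σ j := if_neg h
        have hr2 : rho i j (σ * Equiv.swap i j)
            = rhoB (σ * Equiv.swap i j * Equiv.swap i j) j * Equiv.swap i j := if_pos h3
        rw [hr1, hr2, mul_assoc σ, Equiv.swap_mul_self, mul_one, ← add_assoc]
        exact hT σ h
    · intro σ _ _ he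
      have h2 := congrArg (fun τ : Equiv.Perm (Fin n) => τ i) he
      simp only [Equiv.Perm.mul_apply, Equiv.swap_apply_left] at h2
      exact hij' (σ.injective h2).symm
    · exact fun σ _ => Finset.mem_univ _
    · intro σ _
      rw [mul_assoc, Equiv.swap_mul_self, mul_one]
  rw [Finset.sum_add_distrib, hsum1] at hG
  have h2 : (2 : ℍ[ℝ]) * ∑ σ : Equiv.Perm (Fin n), T σ = 0 := by
    rw [two_mul, hG]
  have h2ne : (2 : ℍ[ℝ]) ≠ 0 := by
    intro h0
    have h3 := congrArg QuaternionAlgebra.re h0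
    rw [show ((2 : ℍ[ℝ]) : ℍ[ℝ]) = ((1 : ℍ[ℝ]) + 1) from one_add_one_eq_two.symm] at h3
    simp [Quaternion.re_add, Quaternion.re_one, Quaternion.re_zero] at h3
  rcases mul_eq_zero.mp h2 with h3 | h3
  · exact absurd h3 h2ne
  · exact h3

lemma key_sum_r (A : Matrix (Fin n) (Fin n) ℍ[ℝ]) (hA : A.IsHermitian) {i j : Fin n}
    (hij : j ≠ i) (c : ℍ[ℝ]) : ∑ σ : Equiv.Perm (Fin n), rterm A i j c σ = 0 :=
  main_sum_zero (fun he => hij he.symm) _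
    (fun σ h => (quartet A hA hij c σ h).1)

lemma key_sum_c (A : Matrix (Fin n) (Fin n) ℍ[ℝ]) (hA : A.IsHermitian) {i j : Fin n}
    (hij : j ≠ i) (c : ℍ[ℝ]) : ∑ σ : Equiv.Perm (Fin n), cterm A i j c σ = 0 :=
  main_sum_zero (fun he => hij he.symm) _
    (fun σ h => (quartet A hA hij c σ h).2)

end Aux9

/-- if the `i`-th row of a Hermitian matrix is replaced by a left
linear combination of its other rows, then the `i`-th row and column
determinants of the resulting matrix vanish. -/
theorem stmt6 {n : ℕ} (A : Matrix (Fin n) (Fin n) ℍ[ℝ]) (hA : A.IsHermitian)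
    (i : Fin n) (k : ℕ) (c : Fin k → ℍ[ℝ]) (e : Fin k → Fin n)
    (he : ∀ l, e l ≠ i) :
    rdet (A.updateRow i fun t => ∑ l, c l * A (e l) t) i = 0 ∧
    cdet (A.updateRow i fun t => ∑ l, c l * A (e l) t) i = 0 := by
  classical
  set b : Fin n → ℍ[ℝ] := fun t => ∑ l, c l * A (e l) t with hb
  have hLmap : ∀ σ : Equiv.Perm (Fin n),
      (leaders σ i).map (cycProd (A.updateRow i b) σ)
        = (leaders σ i).map (cycProd A σ) := by
    intro σ
    apply List.map_congr_left
    intro x hx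
    exact cycProd_updateRow_of_ne A b
      (iterate_ne_of_not_sameCycle (fun hc => (mem_leaders_iff.mp hx).2 hc.symm))
  have hpoint : ∀ σ : Equiv.Perm (Fin n),
      cycProd (A.updateRow i b) σ i
        = ∑ l, c l * cycProd (A.updateRow i (A (e l))) σ i := by
    intro σ
    rw [cycProd_updateRow_self A b σ i]
    have hbv : b (σ i) = ∑ l, c l * A (e l) (σ i) := rfl
    rw [hbv, Finset.sum_mul]
    apply Finset.sum_congr rfl
    intro l _
    rw [cycProd_updateRow_self A (A (e l)) σ i, mul_assoc]
  constructor
  · rw [rdet]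
    have hpt : ∀ σ : Equiv.Perm (Fin n),
        ((Equiv.Perm.sign σ : ℤ) : ℍ[ℝ]) * (cycProd (A.updateRow i b) σ i *
          ((leaders σ i).map (cycProd (A.updateRow i b) σ)).prod)
        = ∑ l, rterm A i (e l) (c l) σ := by
      intro σ
      rw [hLmap σ, hpoint σ, Finset.sum_mul, Finset.mul_sum]
      exact Finset.sum_congr rfl (fun l _ => rfl)
    rw [Finset.sum_congr rfl (fun σ _ => hpt σ), Finset.sum_comm]
    apply Finset.sum_eq_zero
    intro l _
    exact key_sum_r A hA (he l) (c l)
  · rw [cdet]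
    have hLmaprev : ∀ σ : Equiv.Perm (Fin n),
        ((leaders σ i).reverse).map (cycProd (A.updateRow i b) σ)
          = ((leaders σ i).reverse).map (cycProd A σ) := by
      intro σ
      rw [List.map_reverse, hLmap σ, ← List.map_reverse]
    have hpt : ∀ σ : Equiv.Perm (Fin n),
        ((Equiv.Perm.sign σ : ℤ) : ℍ[ℝ]) *
          ((((leaders σ i).reverse).map (cycProd (A.updateRow i b) σ)).prod *
            cycProd (A.updateRow i b) σ i)
        = ∑ l, cterm A i (e l) (c l) σ := by
      intro σ
      rw [hLmaprev σ, hpoint σ, Finset.mul_sum, Finset.mul_sum]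
      exact Finset.sum_congr rfl (fun l _ => rfl)
    rw [Finset.sum_congr rfl (fun σ _ => hpt σ), Finset.sum_comm]
    apply Finset.sum_eq_zero
    intro l _
    exact key_sum_c A hA (he l) (c l)
end Aux4
end Aux2
end

section
/- Let A be an n×n Hermitian matrix over ℍ with Ind A = k, and let X be a matrix satisfying A^{k+1}X = A^k, XAX = X and AX = XA. Then for all sufficiently small real λ > 0 the matrix λI + A^{k+1} is invertible, and both (λI + A^{k+1})^{−1}·A^k and A^k·(λI + A^{k+1})^{−1} converge (entrywise in ℍ) to X as λ → 0⁺. -/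
open Quaternion Matrix Finset

section DrazinAux

variable {R : Type*} [Ring R] [Algebra ℝ R]

private lemma drazin_pow_mul (A X : R) (h2 : X * A * X = X) (h3 : A * X = X * A) :
    ∀ m : ℕ, X ^ (m + 1) * A ^ m = X := by
  intro m
  induction m with
  | zero => simp
  | succ m ih =>
    rw [pow_succ' X, pow_succ A, mul_assoc, ← mul_assoc (X ^ (m + 1)), ih, ← h3,
      ← mul_assoc, h2]

private lemma drazin_key (A X : R) (k : ℕ)
    (h1 : A ^ (k + 1) * X = A ^ k) (h2 : X * A * X = X) (h3 : A * X = X * A)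
    (lam : ℝ) (hl : lam ≠ 0)
    (hu : IsUnit ((1 : R) + lam • X ^ (k + 1))) :
    IsUnit (lam • (1 : R) + A ^ (k + 1)) ∧
      Ring.inverse (lam • (1 : R) + A ^ (k + 1)) * A ^ k
        = X * Ring.inverse ((1 : R) + lam • X ^ (k + 1)) ∧
      A ^ k * Ring.inverse (lam • (1 : R) + A ^ (k + 1))
        = X * Ring.inverse ((1 : R) + lam • X ^ (k + 1)) := by
  have hc : Commute A X := h3
  set B := A ^ (k + 1) with hB
  set E := A * X with hE
  set Y := X ^ (k + 1) with hY
  have fBE : B * E = B := by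
    rw [hB, hE, ← mul_assoc, ← pow_succ, pow_succ', mul_assoc, h1, ← pow_succ']
  have fEB : E * B = B := by
    rw [hB, hE, mul_assoc, (hc.symm.pow_right (k + 1)).eq, h1, ← pow_succ']
  have fYA : Y * A ^ k = X := drazin_pow_mul A X h2 h3 k
  have fAY : A ^ k * Y = X := by rw [(hc.pow_pow k (k + 1)).eq, fYA]
  have fBY : B * Y = E := by rw [hB, pow_succ' A, mul_assoc, fAY, hE]
  have fYB : Y * B = E := by rw [hB, pow_succ A, ← mul_assoc, fYA, ← h3, hE]
  have fEAk : E * A ^ k = A ^ k := by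
    rw [hE, mul_assoc, (hc.symm.pow_right k).eq, ← mul_assoc, ← pow_succ', h1]
  have fAkE : A ^ k * E = A ^ k := by rw [hE, ← mul_assoc, ← pow_succ, h1]
  set M := lam • (1 : R) + B with hM
  set Z := lam⁻¹ • ((1 : R) - E) + Y with hZ
  have hMZ : M * Z = 1 + lam • Y := by
    rw [hM, hZ, add_mul, mul_add, mul_add, smul_mul_assoc, smul_mul_assoc, one_mul,
      one_mul, smul_smul, mul_inv_cancel₀ hl, one_smul, mul_smul_comm, mul_sub,
      mul_one, fBE, sub_self, smul_zero, zero_add, fBY]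
    abel
  have hZM : Z * M = 1 + lam • Y := by
    rw [hZ, hM, add_mul, mul_add, mul_add, smul_mul_assoc, smul_mul_assoc,
      mul_smul_comm, mul_one, smul_smul, inv_mul_cancel₀ hl, one_smul, sub_mul,
      one_mul, fEB, sub_self, smul_zero, add_zero, mul_smul_comm, mul_one, fYB]
    abel
  have hZAk : Z * A ^ k = X := by
    rw [hZ, add_mul, smul_mul_assoc, sub_mul, one_mul, fEAk, sub_self, smul_zero,
      zero_add, fYA]
  have hAkZ : A ^ k * Z = X := by
    rw [hZ, mul_add, mul_smul_comm, mul_sub, mul_one, fAkE, sub_self, smul_zero,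
      zero_add, fAY]
  set u := hu.unit with hu'
  have huval : (u : R) = 1 + lam • Y := hu.unit_spec
  have cXE : Commute X E := hc.symm.mul_right (Commute.refl X)
  have cYE : Commute Y E := cXE.pow_left (k + 1)
  have cZY : Commute Z Y :=
    (((Commute.one_left Y).sub_left cYE.symm).smul_left lam⁻¹).add_left (Commute.refl Y)
  have cZu : Commute Z (u : R) := by
    rw [huval]; exact (Commute.one_right Z).add_right (cZY.smul_right lam)
  have cMY : Commute M Y := by
    have cBY : Commute B Y := fBY.trans fYB.symm
    exact ((Commute.one_left Y).smul_left lam).add_left cBY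
  have cMu : Commute M (u : R) := by
    rw [huval]; exact (Commute.one_right M).add_right (cMY.smul_right lam)
  have cAkY : Commute (A ^ k) Y := hc.pow_pow k (k + 1)
  have cAku : Commute (A ^ k) (u : R) := by
    rw [huval]; exact (Commute.one_right _).add_right (cAkY.smul_right lam)
  set W := Z * (↑u⁻¹ : R) with hW
  have hMW : M * W = 1 := by
    rw [hW, ← mul_assoc, hMZ, ← huval, u.mul_inv]
  have hWM : W * M = 1 := by
    rw [hW, mul_assoc, ← (cMu.units_inv_right).eq, ← mul_assoc, hZM, ← huval, u.mul_inv]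
  have hUnit : IsUnit M := ⟨⟨M, W, hMW, hWM⟩, rfl⟩
  have hinv : Ring.inverse M = W := by
    calc Ring.inverse M = Ring.inverse M * (M * W) := by rw [hMW, mul_one]
      _ = Ring.inverse M * M * W := by rw [mul_assoc]
      _ = W := by rw [Ring.inverse_mul_cancel M hUnit, one_mul]
  have hinvu : (↑u⁻¹ : R) = Ring.inverse ((1 : R) + lam • Y) := by
    rw [← huval, Ring.inverse_unit]
  refine ⟨hUnit, ?_, ?_⟩
  · rw [hinv, hW, mul_assoc, (cAku.units_inv_right).symm.eq, ← mul_assoc, hZAk, hinvu]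
  · rw [hinv, hW, ← mul_assoc, hAkZ, hinvu]

end DrazinAux

private lemma mat_exists_eps {n : ℕ} (Y : Matrix (Fin n) (Fin n) ℍ[ℝ]) :
    ∃ ε > (0 : ℝ), ∀ lam : ℝ, 0 < lam → lam < ε →
      IsUnit ((1 : Matrix (Fin n) (Fin n) ℍ[ℝ]) + lam • Y) := by
  letI := (Matrix.linftyOpNormedRing : NormedRing (Matrix (Fin n) (Fin n) ℍ[ℝ]))
  letI := (Matrix.linftyOpNormedAlgebra : NormedAlgebra ℝ (Matrix (Fin n) (Fin n) ℍ[ℝ]))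
  letI : CompleteSpace (Matrix (Fin n) (Fin n) ℍ[ℝ]) :=
    FiniteDimensional.complete ℝ _
  have hY1 : (0 : ℝ) < ‖Y‖ + 1 := by positivity
  refine ⟨(‖Y‖ + 1)⁻¹, by positivity, fun lam h0 he => ?_⟩
  have hn : ‖-(lam • Y)‖ < 1 := by
    rw [norm_neg, norm_smul, Real.norm_eq_abs, abs_of_pos h0]
    calc lam * ‖Y‖ ≤ lam * (‖Y‖ + 1) := by nlinarith [norm_nonneg Y]
      _ < (‖Y‖ + 1)⁻¹ * (‖Y‖ + 1) := mul_lt_mul_of_pos_right he hY1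
      _ = 1 := inv_mul_cancel₀ (ne_of_gt hY1)
  have h := (Units.oneSub (-(lam • Y)) hn).isUnit
  rwa [Units.val_oneSub, sub_neg_eq_add] at h

private lemma mat_tendsto {n : ℕ} (X Y : Matrix (Fin n) (Fin n) ℍ[ℝ]) (i j : Fin n) :
    Filter.Tendsto
      (fun lam : ℝ => (X * Ring.inverse ((1 : Matrix (Fin n) (Fin n) ℍ[ℝ]) + lam • Y)) i j)
      (nhdsWithin 0 (Set.Ioi 0)) (nhds (X i j)) := by
  letI := (Matrix.linftyOpNormedRing : NormedRing (Matrix (Fin n) (Fin n) ℍ[ℝ]))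
  letI := (Matrix.linftyOpNormedAlgebra : NormedAlgebra ℝ (Matrix (Fin n) (Fin n) ℍ[ℝ]))
  letI : CompleteSpace (Matrix (Fin n) (Fin n) ℍ[ℝ]) :=
    FiniteDimensional.complete ℝ _
  have entry_le : ∀ (M : Matrix (Fin n) (Fin n) ℍ[ℝ]), ‖M i j‖ ≤ ‖M‖ := by
    intro M
    have h : ‖M i j‖₊ ≤ ‖M‖₊ := by
      rw [Matrix.linfty_opNNNorm_def]
      exact le_trans
        (Finset.single_le_sum (f := fun j' => ‖M i j'‖₊) (fun _ _ => zero_le)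
          (Finset.mem_univ j))
        (Finset.le_sup (f := fun i => ∑ j : Fin n, ‖M i j‖₊) (Finset.mem_univ i))
    exact_mod_cast h
  have hc : Filter.Tendsto (fun lam : ℝ => (1 : Matrix (Fin n) (Fin n) ℍ[ℝ]) + lam • Y)
      (nhds 0) (nhds 1) := by
    have hcont : Continuous fun lam : ℝ => (1 : Matrix (Fin n) (Fin n) ℍ[ℝ]) + lam • Y :=
      continuous_const.add (continuous_id.smul continuous_const)
    simpa using hcont.tendsto 0
  have h2 : Filter.Tendsto
      (fun lam : ℝ => Ring.inverse ((1 : Matrix (Fin n) (Fin n) ℍ[ℝ]) + lam • Y))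
      (nhdsWithin 0 (Set.Ioi 0)) (nhds 1) := by
    have h := (NormedRing.inverse_continuousAt (1 : (Matrix (Fin n) (Fin n) ℍ[ℝ])ˣ)).tendsto
    simp only [Units.val_one, Ring.inverse_one] at h
    exact h.comp (hc.mono_left nhdsWithin_le_nhds)
  have key : Filter.Tendsto
      (fun lam : ℝ => X * Ring.inverse ((1 : Matrix (Fin n) (Fin n) ℍ[ℝ]) + lam • Y))
      (nhdsWithin 0 (Set.Ioi 0)) (nhds X) := by
    have h3 := h2.const_mul X
    simpa using h3
  have key2 : Filter.Tendsto
      (fun lam : ℝ =>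
        ‖X * Ring.inverse ((1 : Matrix (Fin n) (Fin n) ℍ[ℝ]) + lam • Y) - X‖)
      (nhdsWithin 0 (Set.Ioi 0)) (nhds 0) :=
    tendsto_iff_norm_sub_tendsto_zero.mp key
  rw [tendsto_iff_norm_sub_tendsto_zero]
  refine squeeze_zero (fun _ => norm_nonneg _) (fun lam => ?_) key2
  have h := entry_le (X * Ring.inverse ((1 : Matrix (Fin n) (Fin n) ℍ[ℝ]) + lam • Y) - X)
  simpa [Matrix.sub_apply] using h


/-- limit representation of the Drazin inverse of a Hermitian
quaternion matrix: for all sufficiently small real `λ > 0` the matrix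
`λI + A^{k+1}` is invertible, and both `(λI + A^{k+1})⁻¹ A^k` and
`A^k (λI + A^{k+1})⁻¹` converge entrywise to the Drazin inverse `X`
as `λ → 0⁺`. -/
theorem stmt11 {n : ℕ} (A X : Matrix (Fin n) (Fin n) ℍ[ℝ]) (hA : A.IsHermitian)
    (k : ℕ) (hk : isInd A k) (hX : isDrazin A X k) :
    (∃ ε > (0 : ℝ), ∀ lam : ℝ, 0 < lam → lam < ε →
      IsUnit ((lam : ℍ[ℝ]) • (1 : Matrix (Fin n) (Fin n) ℍ[ℝ]) + A ^ (k + 1))) ∧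
    (∀ i j : Fin n, Filter.Tendsto
      (fun lam : ℝ =>
        (Ring.inverse ((lam : ℍ[ℝ]) • (1 : Matrix (Fin n) (Fin n) ℍ[ℝ]) + A ^ (k + 1))
          * A ^ k) i j)
      (nhdsWithin 0 (Set.Ioi 0)) (nhds (X i j))) ∧
    (∀ i j : Fin n, Filter.Tendsto
      (fun lam : ℝ =>
        (A ^ k *
          Ring.inverse ((lam : ℍ[ℝ]) • (1 : Matrix (Fin n) (Fin n) ℍ[ℝ]) + A ^ (k + 1))) i j)
      (nhdsWithin 0 (Set.Ioi 0)) (nhds (X i j))) := by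
  obtain ⟨h1, h2, h3⟩ := hX
  have hsm : ∀ (lam : ℝ) (M : Matrix (Fin n) (Fin n) ℍ[ℝ]),
      (lam : ℍ[ℝ]) • M = lam • M := by
    intro lam M
    funext i j
    show (lam : ℍ[ℝ]) • M i j = lam • M i j
    rw [smul_eq_mul, Quaternion.coe_mul_eq_smul]
  obtain ⟨ε, hεpos, hunit⟩ := mat_exists_eps (X ^ (k + 1))
  have key := fun (lam : ℝ) (h0 : 0 < lam) (he : lam < ε) =>
    drazin_key A X k h1 h2 h3 lam (ne_of_gt h0) (hunit lam h0 he)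
  have hev : ∀ᶠ lam in nhdsWithin (0 : ℝ) (Set.Ioi 0), lam ∈ Set.Ioo 0 ε :=
    Ioo_mem_nhdsGT_of_mem ⟨le_refl 0, hεpos⟩
  refine ⟨⟨ε, hεpos, fun lam h0 he => ?_⟩, fun i j => ?_, fun i j => ?_⟩
  · rw [hsm]; exact (key lam h0 he).1
  · refine Filter.Tendsto.congr' ?_ (mat_tendsto X (X ^ (k + 1)) i j)
    filter_upwards [hev] with lam hlam
    obtain ⟨h0, he⟩ := hlam
    rw [hsm, (key lam h0 he).2.1]
  · refine Filter.Tendsto.congr' ?_ (mat_tendsto X (X ^ (k + 1)) i j)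
    filter_upwards [hev] with lam hlam
    obtain ⟨h0, he⟩ := hlam
    rw [hsm, (key lam h0 he).2.2]
end

section
/- Let A be an n×n matrix over ℍ with Ind A = k. Then for all i, j ∈ {1,…,n}, the rank of the matrix (A^{k+1})_{.i}(a_{.j}^{(k)}), obtained from A^{k+1} by replacing its i-th column with the j-th column of A^k, is at most the rank of A^{k+1}. -/
open Quaternion Matrix Finset

instance : Module.Finite ℍ[ℝ]ᵐᵒᵖ ℍ[ℝ] :=
  Module.Finite.of_surjective
    ({ toFun := MulOpposite.unop, map_add' := fun _ _ => rfl,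
       map_smul' := fun _ _ => rfl } : ℍ[ℝ]ᵐᵒᵖ →ₗ[ℍ[ℝ]ᵐᵒᵖ] ℍ[ℝ])
    MulOpposite.unop_surjective

/-- column space of `A*B` is contained in column space of `A`. -/
lemma span_col_mul {n : ℕ} (A B : Matrix (Fin n) (Fin n) ℍ[ℝ]) :
    Submodule.span ℍ[ℝ]ᵐᵒᵖ (Set.range (A * B)ᵀ) ≤
      Submodule.span ℍ[ℝ]ᵐᵒᵖ (Set.range Aᵀ) := by
  rw [Submodule.span_le]
  rintro _ ⟨l, rfl⟩
  have h : (A * B)ᵀ l = ∑ p, MulOpposite.op (B p l) • Aᵀ p := by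
    funext m
    simp only [Finset.sum_apply, Pi.smul_apply, MulOpposite.smul_eq_mul_unop,
      MulOpposite.unop_op, Matrix.transpose_apply, Matrix.mul_apply]
  rw [h]
  exact Submodule.sum_mem _ fun p _ =>
    Submodule.smul_mem _ _ (Submodule.subset_span ⟨p, rfl⟩)

/-- replacing the `i`-th column of `A^{k+1}` by the `j`-th column
of `A^k` does not increase the rank beyond that of `A^{k+1}`. -/
theorem stmt12 {n : ℕ} (A : Matrix (Fin n) (Fin n) ℍ[ℝ]) (k : ℕ)
    (hk : isInd A k) (i j : Fin n) :
    qrank ((A ^ (k + 1)).updateCol i fun l => (A ^ k) l j) ≤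
      qrank (A ^ (k + 1)) := by
  classical
  have hle : Submodule.span ℍ[ℝ]ᵐᵒᵖ (Set.range (A ^ (k + 1))ᵀ) ≤
      Submodule.span ℍ[ℝ]ᵐᵒᵖ (Set.range (A ^ k)ᵀ) := by
    have : A ^ (k + 1) = A ^ k * A := by rw [pow_succ]
    rw [this]
    exact span_col_mul _ _
  have heq : Submodule.span ℍ[ℝ]ᵐᵒᵖ (Set.range (A ^ (k + 1))ᵀ) =
      Submodule.span ℍ[ℝ]ᵐᵒᵖ (Set.range (A ^ k)ᵀ) :=
    Submodule.eq_of_le_of_finrank_eq hle hk.1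
  have hc : (fun l => (A ^ k) l j) ∈
      Submodule.span ℍ[ℝ]ᵐᵒᵖ (Set.range (A ^ (k + 1))ᵀ) := by
    rw [heq]
    exact Submodule.subset_span ⟨j, rfl⟩
  apply Submodule.finrank_mono
  rw [Submodule.span_le]
  rintro _ ⟨l, rfl⟩
  rw [← Matrix.updateRow_transpose]
  by_cases hl : l = i
  · subst hl
    rw [Matrix.updateRow_self]
    exact hc
  · rw [Matrix.updateRow_ne hl]
    exact Submodule.subset_span ⟨l, rfl⟩
end

section
/- Let A be an n×n matrix over ℍ with Ind A = k. Then for all i, j ∈ {1,…,n}, the rank of the matrix (A^{k+1})_{i.}(a_{j.}^{(k)}), obtained from A^{k+1} by replacing its i-th row with the j-th row of A^k, is at most the rank of A^{k+1}. -/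
open Quaternion Matrix Finset

/-- Left multiplication by a matrix, as a right-linear (`ℍᵐᵒᵖ`-linear) map. -/
noncomputable def mulVecRight {m n : ℕ} (B : Matrix (Fin m) (Fin n) ℍ[ℝ]) :
    (Fin n → ℍ[ℝ]) →ₗ[ℍ[ℝ]ᵐᵒᵖ] (Fin m → ℍ[ℝ]) where
  toFun x := B.mulVec x
  map_add' x y := by
    funext p
    simp [Matrix.mulVec, dotProduct, mul_add, Finset.sum_add_distrib]
  map_smul' q x := by
    funext p
    induction q using MulOpposite.rec' with
    | h q =>
      simp [Matrix.mulVec, dotProduct, MulOpposite.smul_eq_mul_unop,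
        Finset.sum_mul, mul_assoc]

instance inst_s13 : Module.Finite ℍ[ℝ]ᵐᵒᵖ ℍ[ℝ] :=
  Module.Finite.of_surjective (LinearMap.toSpanSingleton ℍ[ℝ]ᵐᵒᵖ ℍ[ℝ] 1)
    (fun x => ⟨MulOpposite.op x, by simp [LinearMap.toSpanSingleton_apply,
      MulOpposite.smul_eq_mul_unop]⟩)

instance (m : ℕ) : FiniteDimensional ℍ[ℝ]ᵐᵒᵖ (Fin m → ℍ[ℝ]) :=
  Module.Finite.pi

lemma qrank_mul_le_right {m n p : ℕ} (B : Matrix (Fin m) (Fin n) ℍ[ℝ])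
    (C : Matrix (Fin n) (Fin p) ℍ[ℝ]) : qrank (B * C) ≤ qrank C := by
  unfold qrank
  have hsub : Submodule.span ℍ[ℝ]ᵐᵒᵖ (Set.range (B * C)ᵀ) ≤
      (Submodule.span ℍ[ℝ]ᵐᵒᵖ (Set.range Cᵀ)).map (mulVecRight B) := by
    rw [Submodule.map_span]
    apply Submodule.span_mono
    rintro _ ⟨l, rfl⟩
    refine ⟨Cᵀ l, ⟨l, rfl⟩, ?_⟩
    funext q
    simp [mulVecRight, Matrix.mulVec, dotProduct, Matrix.mul_apply,
      Matrix.transpose_apply]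
  calc Module.finrank ℍ[ℝ]ᵐᵒᵖ
        (Submodule.span ℍ[ℝ]ᵐᵒᵖ (Set.range (B * C)ᵀ) : Submodule ℍ[ℝ]ᵐᵒᵖ (Fin m → ℍ[ℝ]))
      ≤ Module.finrank ℍ[ℝ]ᵐᵒᵖ
        ((Submodule.span ℍ[ℝ]ᵐᵒᵖ (Set.range Cᵀ)).map (mulVecRight B)) :=
        Submodule.finrank_mono hsub
    _ ≤ Module.finrank ℍ[ℝ]ᵐᵒᵖ
        (Submodule.span ℍ[ℝ]ᵐᵒᵖ (Set.range Cᵀ) : Submodule ℍ[ℝ]ᵐᵒᵖ (Fin n → ℍ[ℝ])) :=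
        Submodule.finrank_map_le _ _

/-- replacing the `i`-th row of `A^{k+1}` by the `j`-th row of
`A^k` does not increase the rank beyond that of `A^{k+1}`. -/
theorem stmt13 {n : ℕ} (A : Matrix (Fin n) (Fin n) ℍ[ℝ]) (k : ℕ)
    (hk : isInd A k) (i j : Fin n) :
    qrank ((A ^ (k + 1)).updateRow i fun l => (A ^ k) j l) ≤
      qrank (A ^ (k + 1)) := by
  have hC : (A ^ (k + 1)).updateRow i (fun l => (A ^ k) j l) =
      (A.updateRow i (Pi.single j 1)) * A ^ k := by
    refine Matrix.ext fun l p => ?_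
    rw [Matrix.mul_apply]
    by_cases hl : l = i
    · subst hl
      simp [Matrix.updateRow_apply, Pi.single_apply, ite_mul,
        Finset.sum_ite_eq, Finset.mem_univ]
    · rw [Matrix.updateRow_ne hl, Matrix.updateRow_ne hl, pow_succ',
        Matrix.mul_apply]
  rw [hC, hk.1]
  exact qrank_mul_le_right _ _
end

section
/- Let A be an n×n Hermitian matrix over ℍ with Ind A = k, and let t be a real number. Then for all i, j ∈ {1,…,n}, rdet_j ((tI + A^{k+1})_{j.}(a_{i.}^{(k)})) = r₁^{(ij)} t^{n−1} + r₂^{(ij)} t^{n−2} + ⋯ + r_n^{(ij)}, where r_n^{(ij)} = rdet_j ((A^{k+1})_{j.}(a_{i.}^{(k)})) and, for 1 ≤ s ≤ n−1, r_s^{(ij)} = Σ_{α∈I_{s,n}{j}} rdet_j ( ((A^{k+1})_{j.}(a_{i.}^{(k)}))_α^α ), the sum of the j-th row determinants of the order-s principal submatrices, containing the index j, of the matrix obtained from A^{k+1} by replacing its j-th row with the i-th row of A^k. -/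
open Quaternion Matrix Finset

namespace Stmt15
open Equiv Function

variable {n : ℕ}

lemma mp_pos (σ : Equiv.Perm (Fin n)) (x : Fin n) :
    0 < Function.minimalPeriod (⇑σ) x := by
  refine Function.IsPeriodicPt.minimalPeriod_pos (orderOf_pos σ) ?_
  show (⇑σ)^[orderOf σ] x = x
  rw [Equiv.Perm.iterate_eq_pow, pow_orderOf_eq_one]; rfl

lemma mp_iterate (σ : Equiv.Perm (Fin n)) (x : Fin n) :
    (⇑σ)^[Function.minimalPeriod (⇑σ) x] x = x :=
  Function.iterate_minimalPeriod

lemma mp_le (σ : Equiv.Perm (Fin n)) (x : Fin n) :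
    Function.minimalPeriod (⇑σ) x ≤ n := by
  have h : Set.InjOn (fun t => (⇑σ)^[t] x) (Set.Iio (Function.minimalPeriod (⇑σ) x)) :=
    Function.iterate_injOn_Iio_minimalPeriod
  have := Finset.card_le_card_of_injOn (f := fun t => (⇑σ)^[t] x)
    (s := Finset.range (Function.minimalPeriod (⇑σ) x)) (t := Finset.univ)
    (fun a _ => Finset.mem_univ _)
    (fun a ha b hb hab => h (by simpa using ha) (by simpa using hb) hab)
  simpa using this

lemma inCycleB_iff (σ : Equiv.Perm (Fin n)) (i x : Fin n) :
    inCycleB σ i x = true ↔ ∃ t, (⇑σ)^[t] i = x := by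
  unfold inCycleB
  simp only [List.any_eq_true, List.mem_range, decide_eq_true_eq]
  constructor
  · rintro ⟨t, _, h⟩; exact ⟨t, h⟩
  · rintro ⟨t, h⟩
    refine ⟨t % Function.minimalPeriod (⇑σ) i,
      lt_of_lt_of_le (Nat.mod_lt _ (mp_pos σ i)) (mp_le σ i), ?_⟩
    rw [Function.iterate_mod_minimalPeriod_eq]; exact h

lemma isLeaderB_iff (σ : Equiv.Perm (Fin n)) (x : Fin n) :
    isLeaderB σ x = true ↔ ∀ t, x ≤ (⇑σ)^[t] x := by
  unfold isLeaderB
  simp only [List.all_eq_true, List.mem_range, decide_eq_true_eq]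
  constructor
  · intro h t
    rw [← Function.iterate_mod_minimalPeriod_eq]
    exact h _ (lt_of_lt_of_le (Nat.mod_lt _ (mp_pos σ x)) (mp_le σ x))
  · intro h t _; exact h t

lemma mem_leaders_iff (σ : Equiv.Perm (Fin n)) (i x : Fin n) :
    x ∈ leaders σ i ↔ (∀ t, x ≤ (⇑σ)^[t] x) ∧ ¬ ∃ t, (⇑σ)^[t] i = x := by
  unfold leaders
  rw [List.mem_filter]
  simp only [List.mem_finRange, true_and, Bool.and_eq_true, Bool.not_eq_true',
    isLeaderB_iff, ← inCycleB_iff]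
  constructor
  · rintro ⟨h1, h2⟩; exact ⟨h1, by simp [h2]⟩
  · rintro ⟨h1, h2⟩; exact ⟨h1, by simpa using h2⟩

lemma inCycle_symm (σ : Equiv.Perm (Fin n)) {i x : Fin n} (h : ∃ t, (⇑σ)^[t] i = x) :
    ∃ t, (⇑σ)^[t] x = i := by
  obtain ⟨t, ht⟩ := h
  set p := Function.minimalPeriod (⇑σ) i with hp
  have h1 : (⇑σ)^[t % p] i = x := by rw [Function.iterate_mod_minimalPeriod_eq]; exact ht
  refine ⟨p - t % p, ?_⟩
  rw [← h1, ← Function.iterate_add_apply,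
    Nat.sub_add_cancel (le_of_lt (Nat.mod_lt _ (mp_pos σ i)))]
  exact mp_iterate σ i

lemma iterate_not_fixed (σ : Equiv.Perm (Fin n)) {x : Fin n} (hx : σ x ≠ x) (t : ℕ) :
    σ ((⇑σ)^[t] x) ≠ (⇑σ)^[t] x := by
  intro h
  apply hx
  have h2 : (⇑σ)^[t] (σ x) = (⇑σ)^[t] x := by
    rw [← Function.iterate_succ_apply, Function.iterate_succ_apply']; exact h
  have : Function.Injective ((⇑σ)^[t]) := by
    rw [Equiv.Perm.iterate_eq_pow]; exact (σ ^ t).injective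
  exact this h2

lemma not_inCycle_avoid (σ : Equiv.Perm (Fin n)) {i x : Fin n}
    (h : ¬ ∃ t, (⇑σ)^[t] i = x) (t : ℕ) : (⇑σ)^[t] x ≠ i := by
  intro ht
  exact h (inCycle_symm σ ⟨t, ht⟩)

lemma cycProd_congr {A B : Matrix (Fin n) (Fin n) ℍ[ℝ]} (σ : Equiv.Perm (Fin n)) (x : Fin n)
    (h : ∀ t, A ((⇑σ)^[t] x) ((⇑σ)^[t + 1] x) = B ((⇑σ)^[t] x) ((⇑σ)^[t + 1] x)) :
    cycProd A σ x = cycProd B σ x := by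
  unfold cycProd
  congr 1
  exact List.map_congr_left (fun t _ => h t)

lemma cycProd_fixed (A : Matrix (Fin n) (Fin n) ℍ[ℝ]) (σ : Equiv.Perm (Fin n)) (x : Fin n)
    (h : σ x = x) : cycProd A σ x = A x x := by
  unfold cycProd
  rw [Function.minimalPeriod_eq_one_iff_isFixedPt.2 h]
  have : List.range 1 = [0] := rfl
  rw [this]
  simp only [List.map_cons, List.map_nil, List.prod_cons, List.prod_nil,
    mul_one, Function.iterate_one, Function.iterate_zero, id_eq, zero_add, h]


section Transfer

def extPerm (α : Finset (Fin n)) (τ : Equiv.Perm (Fin α.card)) : Equiv.Perm (Fin n) :=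
  τ.extendDomain (α.orderIsoOfFin rfl).toEquiv

variable (α : Finset (Fin n)) (τ : Equiv.Perm (Fin α.card))

lemma coe_e (y : Fin α.card) :
    ((α.orderIsoOfFin rfl y : Fin n)) = α.orderEmbOfFin rfl y :=
  Finset.coe_orderIsoOfFin_apply α rfl y

lemma extPerm_apply_e (y : Fin α.card) :
    extPerm α τ (α.orderEmbOfFin rfl y) = α.orderEmbOfFin rfl (τ y) := by
  rw [← coe_e, ← coe_e]
  exact τ.extendDomain_apply_image (α.orderIsoOfFin rfl).toEquiv y

lemma extPerm_apply_not_mem {x : Fin n} (hx : x ∉ α) : extPerm α τ x = x :=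
  τ.extendDomain_apply_not_subtype (α.orderIsoOfFin rfl).toEquiv hx

lemma extPerm_iterate (t : ℕ) (y : Fin α.card) :
    (⇑(extPerm α τ))^[t] (α.orderEmbOfFin rfl y) = α.orderEmbOfFin rfl ((⇑τ)^[t] y) := by
  induction t generalizing y with
  | zero => rfl
  | succ t ih =>
      rw [Function.iterate_succ_apply, Function.iterate_succ_apply, extPerm_apply_e, ih]

lemma extPerm_minimalPeriod (y : Fin α.card) :
    Function.minimalPeriod (⇑(extPerm α τ)) (α.orderEmbOfFin rfl y) =
      Function.minimalPeriod (⇑τ) y := by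
  rw [Function.minimalPeriod_eq_minimalPeriod_iff]
  intro t
  show (⇑(extPerm α τ))^[t] _ = _ ↔ (⇑τ)^[t] y = y
  rw [extPerm_iterate]
  exact ⟨fun h => (α.orderEmbOfFin rfl).injective h, fun h => by rw [h]⟩

lemma extPerm_cycProd (M : Matrix (Fin n) (Fin n) ℍ[ℝ]) (y : Fin α.card) :
    cycProd M (extPerm α τ) (α.orderEmbOfFin rfl y) = cycProd (principalSub M α) τ y := by
  unfold cycProd
  rw [extPerm_minimalPeriod]
  congr 1
  refine List.map_congr_left (fun t _ => ?_)
  rw [extPerm_iterate, extPerm_iterate]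
  rfl

lemma extPerm_sign : Equiv.Perm.sign (extPerm α τ) = Equiv.Perm.sign τ :=
  Equiv.Perm.sign_extendDomain τ _

lemma e_posIn {j : Fin n} (hj : j ∈ α) : α.orderEmbOfFin rfl (posIn α hj) = j := by
  rw [← coe_e]
  show ((α.orderIsoOfFin rfl) ((α.orderIsoOfFin rfl).symm ⟨j, hj⟩) : Fin n) = j
  simp only [OrderIso.apply_symm_apply]

lemma mem_iff_exists_e {x : Fin n} : x ∈ α ↔ ∃ y, α.orderEmbOfFin rfl y = x := by
  constructor
  · intro hx
    exact ⟨(α.orderIsoOfFin rfl).symm ⟨x, hx⟩, e_posIn α hx⟩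
  · rintro ⟨y, rfl⟩
    exact α.orderEmbOfFin_mem rfl y

lemma extPerm_iterate_j {j : Fin n} (hj : j ∈ α) (t : ℕ) :
    (⇑(extPerm α τ))^[t] j = α.orderEmbOfFin rfl ((⇑τ)^[t] (posIn α hj)) := by
  conv_lhs => rw [← e_posIn α hj]
  rw [extPerm_iterate]

lemma e_mem_leaders_iff {j : Fin n} (hj : j ∈ α) (y : Fin α.card) :
    α.orderEmbOfFin rfl y ∈ leaders (extPerm α τ) j ↔ y ∈ leaders τ (posIn α hj) := by
  rw [mem_leaders_iff, mem_leaders_iff]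
  have h1 : (∀ t, α.orderEmbOfFin rfl y ≤ (⇑(extPerm α τ))^[t] (α.orderEmbOfFin rfl y)) ↔
      ∀ t, y ≤ (⇑τ)^[t] y := by
    refine forall_congr' (fun t => ?_)
    rw [extPerm_iterate]
    exact (α.orderEmbOfFin rfl).le_iff_le
  have h2 : (∃ t, (⇑(extPerm α τ))^[t] j = α.orderEmbOfFin rfl y) ↔
      ∃ t, (⇑τ)^[t] (posIn α hj) = y := by
    refine exists_congr (fun t => ?_)
    rw [extPerm_iterate_j α τ hj]
    exact ⟨fun h => (α.orderEmbOfFin rfl).injective h, fun h => by rw [h]⟩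
  rw [h1, h2]

lemma leaders_sorted (σ : Equiv.Perm (Fin n)) (i : Fin n) :
    List.Pairwise (· < ·) (leaders σ i) :=
  List.Pairwise.sublist (List.filter_sublist) (List.pairwise_lt_finRange n)

lemma leaders_nodup (σ : Equiv.Perm (Fin n)) (i : Fin n) : (leaders σ i).Nodup :=
  (leaders_sorted σ i).nodup

lemma leaders_extPerm {j : Fin n} (hj : j ∈ α) :
    (leaders (extPerm α τ) j).filter (fun x => decide (x ∈ α)) =
      (leaders τ (posIn α hj)).map (α.orderEmbOfFin rfl) := by
  have hs1 : List.Pairwise (· < ·)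
      ((leaders (extPerm α τ) j).filter (fun x => decide (x ∈ α))) :=
    List.Pairwise.sublist (List.filter_sublist) (leaders_sorted _ _)
  have hs2 : List.Pairwise (· < ·) ((leaders τ (posIn α hj)).map (α.orderEmbOfFin rfl)) :=
    List.Pairwise.map _ (fun a b hab => (α.orderEmbOfFin rfl).strictMono hab)
      (leaders_sorted _ _)
  refine List.Perm.eq_of_pairwise (fun a b _ _ h1 h2 => absurd (h1.trans h2) (lt_irrefl _)) hs1 hs2 ?_
  refine List.perm_of_nodup_nodup_toFinset_eq
    (List.Nodup.filter _ (leaders_nodup _ _))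
    (List.Nodup.map (α.orderEmbOfFin rfl).injective (leaders_nodup _ _)) ?_
  ext x
  simp only [List.mem_toFinset, List.mem_filter, List.mem_map, decide_eq_true_eq]
  constructor
  · rintro ⟨hmem, hxα⟩
    obtain ⟨y, rfl⟩ := (mem_iff_exists_e α).mp hxα
    exact ⟨y, (e_mem_leaders_iff α τ hj y).mp hmem, rfl⟩
  · rintro ⟨y, hy, rfl⟩
    exact ⟨(e_mem_leaders_iff α τ hj y).mpr hy, α.orderEmbOfFin_mem rfl y⟩

lemma fix_mem_iff (σ : Equiv.Perm (Fin n)) (hσ : ∀ x, x ∉ α → σ x = x) :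
    ∀ x, x ∈ α ↔ σ x ∈ α := by
  intro x
  constructor
  · intro hx
    by_contra hns
    have h1 : σ (σ x) = σ x := hσ _ hns
    have h2 : σ x = x := σ.injective h1
    rw [h2] at hns
    exact hns hx
  · intro hx
    by_contra hn
    rw [hσ x hn] at hx
    exact hn hx

def restrictPerm (σ : Equiv.Perm (Fin n)) (hσ : ∀ x, x ∉ α → σ x = x) :
    Equiv.Perm (Fin α.card) :=
  Equiv.permCongr (α.orderIsoOfFin rfl).toEquiv.symm (σ.subtypePerm (fun x => (fix_mem_iff α σ hσ x).symm))

lemma restrictPerm_apply (σ : Equiv.Perm (Fin n)) (hσ : ∀ x, x ∉ α → σ x = x)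
    (y : Fin α.card) :
    α.orderEmbOfFin rfl (restrictPerm α σ hσ y) = σ (α.orderEmbOfFin rfl y) := by
  rw [← coe_e, ← coe_e]
  simp only [restrictPerm, Equiv.permCongr_apply, Equiv.symm_symm, Equiv.Perm.subtypePerm_apply,
    Equiv.apply_symm_apply]
  simp

lemma restrictPerm_extPerm (τ : Equiv.Perm (Fin α.card)) (hσ : ∀ x, x ∉ α → extPerm α τ x = x) :
    restrictPerm α (extPerm α τ) hσ = τ := by
  refine Equiv.ext fun y => ?_
  apply (α.orderEmbOfFin rfl).injective
  rw [restrictPerm_apply, extPerm_apply_e]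

lemma extPerm_restrictPerm (σ : Equiv.Perm (Fin n)) (hσ : ∀ x, x ∉ α → σ x = x) :
    extPerm α (restrictPerm α σ hσ) = σ := by
  refine Equiv.ext fun x => ?_
  by_cases hx : x ∈ α
  · obtain ⟨y, rfl⟩ := (mem_iff_exists_e α).mp hx
    rw [extPerm_apply_e, restrictPerm_apply]
  · rw [extPerm_apply_not_mem α _ hx, hσ x hx]

lemma sum_fixing_eq_rdet (M : Matrix (Fin n) (Fin n) ℍ[ℝ]) {j : Fin n} (hj : j ∈ α) :
    ∑ σ ∈ Finset.univ.filter (fun σ : Equiv.Perm (Fin n) => ∀ x, x ∉ α → σ x = x),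
      ((Equiv.Perm.sign σ : ℤ) : ℍ[ℝ]) *
        (cycProd M σ j *
          (((leaders σ j).filter (fun x => decide (x ∈ α))).map (cycProd M σ)).prod) =
      rdet (principalSub M α) (posIn α hj) := by
  rw [rdet]
  symm
  refine Finset.sum_bij' (i := fun τ _ => extPerm α τ)
    (j := fun σ hσ => restrictPerm α σ (Finset.mem_filter.mp hσ).2)
    (fun τ _ => Finset.mem_filter.mpr ⟨Finset.mem_univ _,
      fun x hx => extPerm_apply_not_mem α τ hx⟩)
    (fun σ _ => Finset.mem_univ _)
    (fun τ _ => restrictPerm_extPerm α τ _)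
    (fun σ hσ => extPerm_restrictPerm α σ _)
    (fun τ _ => ?_)
  have hc : cycProd M (extPerm α τ) j = cycProd (principalSub M α) τ (posIn α hj) := by
    conv_lhs => rw [← e_posIn α hj]
    rw [extPerm_cycProd]
  have hl : (((leaders (extPerm α τ) j).filter (fun x => decide (x ∈ α))).map
      (cycProd M (extPerm α τ))).prod =
      ((leaders τ (posIn α hj)).map (cycProd (principalSub M α) τ)).prod := by
    rw [leaders_extPerm α τ hj, List.map_map]
    congr 1
    exact List.map_congr_left (fun y _ => extPerm_cycProd α τ M y)
  rw [extPerm_sign, hc, hl]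

end Transfer

lemma coe_mul_comm (r : ℝ) (q : ℍ[ℝ]) : (r : ℍ[ℝ]) * q = q * (r : ℍ[ℝ]) :=
  Quaternion.coe_commutes r q

lemma list_prod_expand (t : ℝ) (P : Fin n → Prop) [DecidablePred P] (f : Fin n → ℍ[ℝ]) :
    ∀ L : List (Fin n), L.Nodup →
      (L.map (fun x => f x + if P x then ((t : ℝ) : ℍ[ℝ]) else 0)).prod =
        ∑ S ∈ L.toFinset.powerset,
          (((if ∀ x ∈ S, P x then (t ^ S.card : ℝ) else 0) : ℝ) : ℍ[ℝ]) *
            ((L.filter (fun x => decide (x ∉ S))).map f).prod := by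
  intro L
  induction L with
  | nil => simp
  | cons a L ih =>
    intro hnd
    obtain ⟨ha, hLnd⟩ := List.nodup_cons.mp hnd
    have haF : a ∉ L.toFinset := by simpa using ha
    rw [List.map_cons, List.prod_cons, ih hLnd, List.toFinset_cons,
      Finset.sum_powerset_insert haF]
    rw [add_mul, Finset.mul_sum, Finset.mul_sum]
    congr 1
    · -- f a part
      refine Finset.sum_congr rfl (fun S hS => ?_)
      have haS : a ∉ S := fun h => haF (Finset.mem_powerset.mp hS h)
      have hfil : (a :: L).filter (fun x => decide (x ∉ S)) =
          a :: L.filter (fun x => decide (x ∉ S)) := by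
        rw [List.filter_cons]
        simp [haS]
      rw [hfil, List.map_cons, List.prod_cons, ← mul_assoc, ← coe_mul_comm, mul_assoc]
    · -- scalar part
      refine Finset.sum_congr rfl (fun S hS => ?_)
      have haS : a ∉ S := fun h => haF (Finset.mem_powerset.mp hS h)
      have h1 : ∀ x ∈ L, (decide (x ∉ insert a S)) = (decide (x ∉ S)) := by
        intro x hx
        have hxa : x ≠ a := fun h => ha (h ▸ hx)
        simp [Finset.mem_insert, hxa]
      have hfil : (a :: L).filter (fun x => decide (x ∉ insert a S)) =
          L.filter (fun x => decide (x ∉ S)) := by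
        rw [List.filter_cons, if_neg (by simp), List.filter_congr h1]
      have hcard : (insert a S).card = S.card + 1 := Finset.card_insert_of_notMem haS
      have hcoef : (((if ∀ x ∈ insert a S, P x then (t ^ (insert a S).card : ℝ) else 0) : ℝ) : ℍ[ℝ])
          = (if P a then ((t : ℝ) : ℍ[ℝ]) else 0) *
            (((if ∀ x ∈ S, P x then (t ^ S.card : ℝ) else 0) : ℝ) : ℍ[ℝ]) := by
        by_cases hPa : P a
        · by_cases hPS : ∀ x ∈ S, P x
          · rw [if_pos hPa, if_pos hPS, if_pos (fun x hx => by
              rcases Finset.mem_insert.mp hx with rfl | h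
              exacts [hPa, hPS x h]), hcard]
            push_cast
            rw [pow_add, pow_one, ← pow_succ, pow_succ']
          · rw [if_pos hPa, if_neg hPS,
              if_neg (fun h => hPS (fun x hx => h x (Finset.mem_insert_of_mem hx)))]
            simp
        · rw [if_neg hPa, if_neg (fun h => hPa (h a (Finset.mem_insert_self a S)))]
          simp
      rw [hfil, hcoef, mul_assoc]

section NM
variable {t : ℝ} {M N : Matrix (Fin n) (Fin n) ℍ[ℝ]} {j : Fin n}

lemma cycProd_row_j (hrow : ∀ m, N j m = M j m)
    (hoff : ∀ l m, l ≠ j → m ≠ l → N l m = M l m) (σ : Equiv.Perm (Fin n)) :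
    cycProd N σ j = cycProd M σ j := by
  by_cases hσj : σ j = j
  · rw [cycProd_fixed N σ j hσj, cycProd_fixed M σ j hσj, hrow]
  · refine cycProd_congr σ j (fun s => ?_)
    have hsucc : (⇑σ)^[s + 1] j = σ ((⇑σ)^[s] j) := Function.iterate_succ_apply' _ _ _
    by_cases hx : (⇑σ)^[s] j = j
    · rw [hx, hrow]
    · rw [hsucc]
      exact hoff _ _ hx (iterate_not_fixed σ hσj s)

lemma cycProd_leader (hoff : ∀ l m, l ≠ j → m ≠ l → N l m = M l m)
    (hdiag : ∀ l, l ≠ j → N l l = M l l + ((t : ℝ) : ℍ[ℝ]))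
    (σ : Equiv.Perm (Fin n)) {x : Fin n} (hx : x ∈ leaders σ j) :
    cycProd N σ x = cycProd M σ x + (if σ x = x then ((t : ℝ) : ℍ[ℝ]) else 0) := by
  obtain ⟨-, hnc⟩ := (mem_leaders_iff σ j x).mp hx
  have havoid : ∀ s, (⇑σ)^[s] x ≠ j := not_inCycle_avoid σ hnc
  have hxj : x ≠ j := havoid 0
  by_cases hfix : σ x = x
  · rw [if_pos hfix, cycProd_fixed N σ x hfix, cycProd_fixed M σ x hfix, hdiag x hxj]
  · rw [if_neg hfix, add_zero]
    refine cycProd_congr σ x (fun s => ?_)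
    have hsucc : (⇑σ)^[s + 1] x = σ ((⇑σ)^[s] x) := Function.iterate_succ_apply' _ _ _
    rw [hsucc]
    exact hoff _ _ (havoid s) (iterate_not_fixed σ hfix s)

end NM

lemma fixed_mem_leaders {σ : Equiv.Perm (Fin n)} {j x : Fin n} (hfix : σ x = x)
    (hxj : x ≠ j) : x ∈ leaders σ j := by
  rw [mem_leaders_iff]
  refine ⟨fun s => by rw [Function.iterate_fixed hfix], fun ⟨s, hs⟩ => ?_⟩
  obtain ⟨u, hu⟩ := inCycle_symm σ ⟨s, hs⟩
  rw [Function.iterate_fixed hfix] at hu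
  exact hxj hu

lemma mem_leaders_ne {σ : Equiv.Perm (Fin n)} {j x : Fin n} (hx : x ∈ leaders σ j) :
    x ≠ j := by
  obtain ⟨-, hnc⟩ := (mem_leaders_iff σ j x).mp hx
  exact fun h => hnc ⟨0, h.symm⟩


noncomputable def G (M : Matrix (Fin n) (Fin n) ℍ[ℝ]) (j : Fin n) :
    Finset (Fin n) → ℍ[ℝ] := fun β =>
  if h : j ∈ β then rdet (principalSub M β) (posIn β h) else 0

lemma move_coe (r : ℝ) (a b c : ℍ[ℝ]) :
    a * (b * ((r : ℍ[ℝ]) * c)) = (r : ℍ[ℝ]) * (a * (b * c)) := by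
  rw [← mul_assoc b, ← coe_mul_comm r b, mul_assoc, ← mul_assoc a, ← coe_mul_comm r a, mul_assoc]

lemma rdet_expand (t : ℝ) (M N : Matrix (Fin n) (Fin n) ℍ[ℝ]) (j : Fin n)
    (hrow : ∀ m, N j m = M j m)
    (hoff : ∀ l m, l ≠ j → m ≠ l → N l m = M l m)
    (hdiag : ∀ l, l ≠ j → N l l = M l l + ((t : ℝ) : ℍ[ℝ])) :
    rdet N j = ∑ S ∈ (Finset.univ.erase j).powerset,
      ((t ^ S.card : ℝ) : ℍ[ℝ]) * G M j Sᶜ := by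
  rw [rdet]
  have key : ∀ σ : Equiv.Perm (Fin n),
      ((Equiv.Perm.sign σ : ℤ) : ℍ[ℝ]) *
          (cycProd N σ j * ((leaders σ j).map (cycProd N σ)).prod)
        = ∑ S ∈ (Finset.univ.erase j).powerset,
            (if ∀ x ∈ S, σ x = x then
              ((t ^ S.card : ℝ) : ℍ[ℝ]) * (((Equiv.Perm.sign σ : ℤ) : ℍ[ℝ]) *
                (cycProd M σ j *
                  (((leaders σ j).filter (fun x => decide (x ∉ S))).map (cycProd M σ)).prod))
            else 0) := by
    intro σ
    have hL : ((leaders σ j).map (cycProd N σ)).prod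
        = ((leaders σ j).map
            (fun x => cycProd M σ x + if σ x = x then ((t : ℝ) : ℍ[ℝ]) else 0)).prod := by
      congr 1
      exact List.map_congr_left (fun x hx => cycProd_leader hoff hdiag σ hx)
    have hsub : (leaders σ j).toFinset ⊆ Finset.univ.erase j := by
      intro x hx
      exact Finset.mem_erase.mpr ⟨mem_leaders_ne (List.mem_toFinset.mp hx), Finset.mem_univ x⟩
    calc ((Equiv.Perm.sign σ : ℤ) : ℍ[ℝ]) *
          (cycProd N σ j * ((leaders σ j).map (cycProd N σ)).prod)
        = ∑ S ∈ (leaders σ j).toFinset.powerset,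
            (if ∀ x ∈ S, σ x = x then
              ((t ^ S.card : ℝ) : ℍ[ℝ]) * (((Equiv.Perm.sign σ : ℤ) : ℍ[ℝ]) *
                (cycProd M σ j *
                  (((leaders σ j).filter (fun x => decide (x ∉ S))).map (cycProd M σ)).prod))
            else 0) := by
          rw [cycProd_row_j hrow hoff σ, hL,
            list_prod_expand t (fun x => σ x = x) (cycProd M σ) (leaders σ j)
              (leaders_nodup σ j), Finset.mul_sum, Finset.mul_sum]
          refine Finset.sum_congr rfl (fun S _ => ?_)
          by_cases h : ∀ x ∈ S, σ x = x
          · rw [if_pos h, if_pos h, move_coe]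
          · rw [if_neg h, if_neg h]
            simp
      _ = _ := by
          refine Finset.sum_subset (Finset.powerset_mono.mpr hsub) (fun S hS hS' => ?_)
          rw [if_neg]
          intro h
          refine hS' (Finset.mem_powerset.mpr (fun x hx => List.mem_toFinset.mpr ?_))
          exact fixed_mem_leaders (h x hx)
            (Finset.mem_erase.mp (Finset.mem_powerset.mp hS hx)).1
  rw [Finset.sum_congr rfl (fun σ _ => key σ), Finset.sum_comm]
  refine Finset.sum_congr rfl (fun S hS => ?_)
  have hjS : j ∉ S := fun h =>
    (Finset.mem_erase.mp (Finset.mem_powerset.mp hS h)).1 rfl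
  have hjc : j ∈ Sᶜ := Finset.mem_compl.mpr hjS
  rw [← Finset.sum_filter, ← Finset.mul_sum]
  congr 1
  rw [G, dif_pos hjc]
  rw [← sum_fixing_eq_rdet Sᶜ M hjc]
  refine Finset.sum_congr (Finset.filter_congr (fun σ _ => ?_)) (fun σ hσ => ?_)
  · constructor
    · intro h x hx
      exact h x (by simpa using hx)
    · intro h x hx
      exact h x (by simpa using hx)
  · congr 2
    refine congrArg _ (congrArg _ ?_)
    exact List.filter_congr (fun x _ => by simp [Finset.mem_compl])


lemma sum_G_powersetCard (M : Matrix (Fin n) (Fin n) ℍ[ℝ]) (s : ℕ) (j : Fin n) :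
    rdetPM M s j =
      ∑ β ∈ ((Finset.powersetCard s (Finset.univ : Finset (Fin n))).filter
        fun β => j ∈ β), G M j β := by
  rw [rdetPM, ← Finset.sum_attach (((Finset.powersetCard s (Finset.univ : Finset (Fin n))).filter
        fun β => j ∈ β)) (G M j)]
  refine Finset.sum_congr rfl (fun β _ => ?_)
  rw [G, dif_pos (Finset.mem_filter.mp β.2).2]

lemma rdet_univ_psub (M : Matrix (Fin n) (Fin n) ℍ[ℝ]) (j : Fin n)
    (h : j ∈ (Finset.univ : Finset (Fin n))) :
    rdet (principalSub M Finset.univ) (posIn Finset.univ h) = rdet M j := by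
  rw [← sum_fixing_eq_rdet Finset.univ M h,
    Finset.filter_true_of_mem (fun σ _ => fun x hx => absurd (Finset.mem_univ x) hx), rdet]
  refine Finset.sum_congr rfl (fun σ _ => ?_)
  congr 2
  exact congrArg _ (congrArg _
    ((List.filter_eq_self (l := leaders σ j)).mpr
      (fun x _ => decide_eq_true (Finset.mem_univ x))))

lemma rdetPM_top (M : Matrix (Fin n) (Fin n) ℍ[ℝ]) (j : Fin n) :
    rdetPM M n j = rdet M j := by
  rw [sum_G_powersetCard]
  have h1 : Finset.powersetCard n (Finset.univ : Finset (Fin n)) = {Finset.univ} := by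
    ext β
    rw [Finset.mem_powersetCard, Finset.mem_singleton]
    constructor
    · rintro ⟨-, hc⟩
      exact (Finset.card_eq_iff_eq_univ β).mp (by rw [hc, Fintype.card_fin])
    · rintro rfl
      exact ⟨Finset.Subset.refl _, by rw [Finset.card_univ, Fintype.card_fin]⟩
  rw [h1, Finset.filter_singleton, if_pos (Finset.mem_univ j), Finset.sum_singleton, G,
    dif_pos (Finset.mem_univ j), rdet_univ_psub]


lemma reindex_compl (j : Fin n) (F : Finset (Fin n) → ℍ[ℝ]) :
    ∑ S ∈ (Finset.univ.erase j).powerset, F Sᶜ =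
      ∑ β ∈ (Finset.univ : Finset (Fin n)).powerset.filter (fun β => j ∈ β), F β := by
  refine Finset.sum_nbij' (i := fun S => Sᶜ) (j := fun β => βᶜ) ?_ ?_ ?_ ?_ ?_
  · intro S hS
    refine Finset.mem_filter.mpr ⟨Finset.mem_powerset.mpr (Finset.subset_univ _),
      Finset.mem_compl.mpr (fun h => ?_)⟩
    exact (Finset.mem_erase.mp (Finset.mem_powerset.mp hS h)).1 rfl
  · intro β hβ
    refine Finset.mem_powerset.mpr (fun x hx => Finset.mem_erase.mpr ⟨?_, Finset.mem_univ x⟩)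
    intro hxj
    exact (Finset.mem_compl.mp hx) (hxj ▸ (Finset.mem_filter.mp hβ).2)
  · intro S _; exact compl_compl S
  · intro β _; exact compl_compl β
  · intro S _; rfl

end Stmt15

/-- the row-determinant characteristic-polynomial expansion:
`rdet_j ((tI + A^{k+1})_{j.}(a_{i.}^{(k)})) = Σ_{s=1}^{n} r_s^{(ij)} t^{n−s}`,
where `r_n^{(ij)} = rdet_j ((A^{k+1})_{j.}(a_{i.}^{(k)}))` and, for
`1 ≤ s ≤ n−1`, `r_s^{(ij)}` is the sum over `α ∈ I_{s,n}{j}` of the `j`-th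
row determinants of the corresponding principal submatrices. -/



theorem stmt15 {n : ℕ} (A : Matrix (Fin n) (Fin n) ℍ[ℝ]) (hA : A.IsHermitian)
    (k : ℕ) (hk : isInd A k) (t : ℝ) (i j : Fin n) (r : ℕ → ℍ[ℝ])
    (hrn : r n = rdet ((A ^ (k + 1)).updateRow j fun l => (A ^ k) i l) j)
    (hrs : ∀ s, 1 ≤ s → s ≤ n - 1 →
      r s = rdetPM ((A ^ (k + 1)).updateRow j fun l => (A ^ k) i l) s j) :
    rdet (((t : ℍ[ℝ]) • (1 : Matrix (Fin n) (Fin n) ℍ[ℝ]) + A ^ (k + 1)).updateRow j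
        fun l => (A ^ k) i l) j =
      ∑ s ∈ Finset.Icc 1 n, r s * (t : ℍ[ℝ]) ^ (n - s) := by
  open Stmt15 in
  classical
  set B := A ^ (k + 1) with hB
  set v : Fin n → ℍ[ℝ] := fun l => (A ^ k) i l with hv
  set M : Matrix (Fin n) (Fin n) ℍ[ℝ] := B.updateRow j v with hMdef
  set N : Matrix (Fin n) (Fin n) ℍ[ℝ] :=
    ((t : ℍ[ℝ]) • (1 : Matrix (Fin n) (Fin n) ℍ[ℝ]) + B).updateRow j v with hNdef
  have hrow : ∀ m, N j m = M j m := by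
    intro m
    rw [hNdef, hMdef, Matrix.updateRow_self, Matrix.updateRow_self]
  have hoff : ∀ l m, l ≠ j → m ≠ l → N l m = M l m := by
    intro l m hlj hml
    rw [hNdef, hMdef, Matrix.updateRow_ne hlj, Matrix.updateRow_ne hlj, Matrix.add_apply,
      Matrix.smul_apply, Matrix.one_apply_ne (Ne.symm hml), smul_zero, zero_add]
  have hdiag : ∀ l, l ≠ j → N l l = M l l + ((t : ℝ) : ℍ[ℝ]) := by
    intro l hlj
    rw [hNdef, hMdef, Matrix.updateRow_ne hlj, Matrix.updateRow_ne hlj, Matrix.add_apply,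
      Matrix.smul_apply, Matrix.one_apply_eq, smul_eq_mul, mul_one, add_comm]
  rw [rdet_expand t M N j hrow hoff hdiag]
  have hcard_le : ∀ S : Finset (Fin n), S.card ≤ n := fun S =>
    le_trans (Finset.card_le_univ S) (le_of_eq (Fintype.card_fin n))
  have hcoef : ∀ S : Finset (Fin n),
      ((t ^ S.card : ℝ) : ℍ[ℝ]) * G M j Sᶜ =
        ((t ^ (n - Sᶜ.card) : ℝ) : ℍ[ℝ]) * G M j Sᶜ := by
    intro S
    have : n - Sᶜ.card = S.card := by
      rw [Finset.card_compl, Fintype.card_fin, Nat.sub_sub_self (hcard_le S)]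
    rw [this]
  rw [Finset.sum_congr rfl (fun S _ => hcoef S),
    reindex_compl j (fun β => ((t ^ (n - β.card) : ℝ) : ℍ[ℝ]) * G M j β)]
  have hmaps : ∀ β ∈ (Finset.univ : Finset (Fin n)).powerset.filter (fun β => j ∈ β),
      β.card ∈ Finset.Icc 1 n := by
    intro β hβ
    refine Finset.mem_Icc.mpr ⟨?_, hcard_le β⟩
    exact Finset.card_pos.mpr ⟨j, (Finset.mem_filter.mp hβ).2⟩
  rw [← Finset.sum_fiberwise_of_maps_to hmaps
    (fun β => ((t ^ (n - β.card) : ℝ) : ℍ[ℝ]) * G M j β)]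
  refine Finset.sum_congr rfl (fun s hs => ?_)
  have hset : ((Finset.univ : Finset (Fin n)).powerset.filter (fun β => j ∈ β)).filter
      (fun β => β.card = s) = (Finset.powersetCard s Finset.univ).filter (fun β => j ∈ β) := by
    ext β
    simp only [Finset.mem_filter, Finset.mem_powerset, Finset.mem_powersetCard]
    tauto
  rw [hset]
  have hterm : ∀ β ∈ (Finset.powersetCard s (Finset.univ : Finset (Fin n))).filter
      (fun β => j ∈ β),
      ((t ^ (n - β.card) : ℝ) : ℍ[ℝ]) * G M j β = ((t ^ (n - s) : ℝ) : ℍ[ℝ]) * G M j β := by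
    intro β hβ
    rw [(Finset.mem_powersetCard.mp (Finset.mem_filter.mp hβ).1).2]
  rw [Finset.sum_congr rfl hterm, ← Finset.mul_sum, ← sum_G_powersetCard]
  have hr : r s = rdetPM M s j := by
    obtain ⟨hs1, hs2⟩ := Finset.mem_Icc.mp hs
    rcases eq_or_lt_of_le hs2 with heq | hlt
    · rw [heq, hrn, ← rdetPM_top M j]
    · exact hrs s hs1 (Nat.le_sub_one_of_lt hlt)
  rw [hr, coe_mul_comm, Quaternion.coe_pow]
end
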